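/- arXiv:2312.01428 — 9 statements merged into one kernel-verified Lean document; each statement's English description precedes it below -/
import Mathlib

section
/- Let K ⊆ ℝ^m be a pointed closed convex cone (i.e., K ∩ (−K) = {0}) and let D ⊆ ℝ^m be a nonempty set. Then cl cone(D + K) ∩ (−K) = {0} if and only if cl cone(D) ∩ (−K) = {0}. -/
open Set Pointwise Filter Topology

/-- The smallest cone containing `D`: `cone D = {t • d : t ≥ 0, d ∈ D}`. -/
def coneGen {E : Type*} [AddCommGroup E] [Module ℝ E] (D : Set E) : Set E :=
  {x | ∃ t : ℝ, 0 ≤ t ∧ ∃ d ∈ D, x = t • d}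

lemma coneGen_smul_mem {E : Type*} [AddCommGroup E] [Module ℝ E] {D : Set E} {x : E}
    (t : ℝ) (ht : 0 ≤ t) (hx : x ∈ coneGen D) : t • x ∈ coneGen D := by
  obtain ⟨s, hs, d, hd, rfl⟩ := hx
  exact ⟨t * s, mul_nonneg ht hs, d, hd, (mul_smul t s d).symm⟩

lemma zero_mem_coneGen {E : Type*} [AddCommGroup E] [Module ℝ E] {D : Set E}
    (hD : D.Nonempty) : (0 : E) ∈ coneGen D := by
  obtain ⟨d, hd⟩ := hD
  exact ⟨0, le_rfl, d, hd, (zero_smul ℝ d).symm⟩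

lemma coneGen_mono {E : Type*} [AddCommGroup E] [Module ℝ E] {D D' : Set E}
    (h : D ⊆ D') : coneGen D ⊆ coneGen D' := by
  rintro x ⟨t, ht, d, hd, rfl⟩
  exact ⟨t, ht, d, h hd, rfl⟩

/-- Let `K ⊆ ℝ^m` be a pointed closed convex cone and `D ⊆ ℝ^m` a nonempty set. Then
`cl cone (D + K) ∩ (-K) = {0}` iff `cl cone D ∩ (-K) = {0}`. -/
theorem stmt_0 {m : ℕ} (K D : Set (Fin m → ℝ))
    (hKne : K.Nonempty)
    (hKcone : ∀ t : ℝ, 0 ≤ t → ∀ v ∈ K, t • v ∈ K)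
    (hKclosed : IsClosed K)
    (hKconvex : Convex ℝ K)
    (hKpointed : K ∩ (-K) = {0})
    (hD : D.Nonempty) :
    closure (coneGen (D + K)) ∩ (-K) = {0} ↔
      closure (coneGen D) ∩ (-K) = {0} := by
  obtain ⟨v, hv⟩ := hKne
  have h0K : (0 : Fin m → ℝ) ∈ K := by simpa using hKcone 0 le_rfl v hv
  have h0negK : (0 : Fin m → ℝ) ∈ -K := by simpa using h0K
  have hKadd : ∀ u ∈ K, ∀ w ∈ K, u + w ∈ K := by
    intro u hu w hw
    have h1 : (1/2 : ℝ) • u + (1/2 : ℝ) • w ∈ K :=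
      hKconvex hu hw (by norm_num) (by norm_num) (by norm_num)
    have h2 := hKcone 2 (by norm_num) _ h1
    have : (2 : ℝ) • ((1/2 : ℝ) • u + (1/2 : ℝ) • w) = u + w := by
      rw [smul_add, smul_smul, smul_smul]; norm_num
    rwa [this] at h2
  have hDK : (D + K).Nonempty := hD.add ⟨v, hv⟩
  constructor
  · -- easy direction
    intro h
    have hsub : D ⊆ D + K := fun d hd => ⟨d, hd, 0, h0K, add_zero d⟩
    apply Set.eq_singleton_iff_unique_mem.mpr
    refine ⟨⟨subset_closure (zero_mem_coneGen hD), h0negK⟩, ?_⟩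
    intro x hx
    have : x ∈ closure (coneGen (D + K)) ∩ (-K) :=
      ⟨closure_mono (coneGen_mono hsub) hx.1, hx.2⟩
    rw [h] at this
    exact this
  · -- hard direction
    intro h
    apply Set.eq_singleton_iff_unique_mem.mpr
    refine ⟨⟨subset_closure (zero_mem_coneGen hDK), h0negK⟩, ?_⟩
    rintro x ⟨hx1, hx2⟩
    obtain ⟨u, hu, hux⟩ := mem_closure_iff_seq_limit.mp hx1
    have hab : ∀ n, ∃ a ∈ coneGen D, ∃ b ∈ K, u n = a + b := by
      intro n
      obtain ⟨t, ht, w, hw, hun⟩ := hu n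
      obtain ⟨d, hd, k, hk, hw'⟩ := hw
      refine ⟨t • d, ⟨t, ht, d, hd, rfl⟩, t • k, hKcone t ht k hk, ?_⟩
      rw [hun, ← hw', smul_add]
    choose a ha b hb hab using hab
    by_cases hbdd : ∃ M : ℝ, ∃ᶠ n in atTop, ‖a n‖ ≤ M
    · -- bounded subsequence case
      obtain ⟨M, hM⟩ := hbdd
      obtain ⟨φ, hφ, hφM⟩ := Filter.extraction_of_frequently_atTop hM
      have hball : ∀ n, a (φ n) ∈ Metric.closedBall (0 : Fin m → ℝ) M := by
        intro n; simpa [Metric.mem_closedBall, dist_eq_norm] using hφM n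
      obtain ⟨aLim, _, ψ, hψ, haψ⟩ :=
        tendsto_subseq_of_bounded Metric.isBounded_closedBall hball
      have hφψ : StrictMono (φ ∘ ψ) := hφ.comp hψ
      have haC : aLim ∈ closure (coneGen D) :=
        mem_closure_of_tendsto haψ (Filter.Eventually.of_forall fun n => ha _)
      have huψ : Filter.Tendsto (fun n => u (φ (ψ n))) atTop (𝓝 x) :=
        hux.comp hφψ.tendsto_atTop
      have hbψ : Filter.Tendsto (fun n => b (φ (ψ n))) atTop (𝓝 (x - aLim)) := by
        have : (fun n => b (φ (ψ n))) = fun n => u (φ (ψ n)) - a (φ (ψ n)) := by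
          funext n; rw [hab (φ (ψ n))]; abel
        rw [this]
        exact huψ.sub haψ
      have hxa : x - aLim ∈ K :=
        hKclosed.mem_of_tendsto hbψ (Filter.Eventually.of_forall fun n => hb _)
      have haK : aLim ∈ -K := by
        have hnx : -x ∈ K := Set.mem_neg.mp hx2
        have : (x - aLim) + (-x) ∈ K := hKadd _ hxa _ hnx
        have h' : -aLim ∈ K := by
          have e : (x - aLim) + (-x) = -aLim := by abel
          rwa [e] at this
        simpa [Set.mem_neg] using h'
      have ha0 : aLim = 0 := by
        have : aLim ∈ closure (coneGen D) ∩ (-K) := ⟨haC, haK⟩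
        rw [h] at this; exact this
      have hxK : x ∈ K := by rw [ha0, sub_zero] at hxa; exact hxa
      have : x ∈ K ∩ (-K) := ⟨hxK, hx2⟩
      rw [hKpointed] at this; exact this
    · -- norms tend to infinity: derive contradiction
      exfalso
      push_neg at hbdd
      have htop : Filter.Tendsto (fun n => ‖a n‖) atTop atTop := by
        refine Filter.tendsto_atTop.mpr fun M => ?_
        have := hbdd M
        filter_upwards [this] with n hn
        exact hn.le
      set c : ℕ → Fin m → ℝ := fun n => ‖a n‖⁻¹ • a n with hc
      have hcD : ∀ n, c n ∈ coneGen D := fun n =>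
        coneGen_smul_mem _ (inv_nonneg.mpr (norm_nonneg _)) (ha n)
      have hcb : ∀ n, c n ∈ Metric.closedBall (0 : Fin m → ℝ) 1 := by
        intro n
        simp only [Metric.mem_closedBall, dist_eq_norm, sub_zero, hc, norm_smul]
        rcases eq_or_ne (a n) 0 with h0 | h0
        · simp [h0]
        · rw [norm_inv, norm_norm, inv_mul_cancel₀ (norm_ne_zero_iff.mpr h0)]
      obtain ⟨z, _, φ, hφ, hcz⟩ :=
        tendsto_subseq_of_bounded Metric.isBounded_closedBall hcb
      have hzC : z ∈ closure (coneGen D) :=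
        mem_closure_of_tendsto hcz (Filter.Eventually.of_forall fun n => hcD _)
      -- eventually ‖a n‖ ≠ 0, so eventually ‖c n‖ = 1
      have hev : ∀ᶠ n in atTop, (1 : ℝ) ≤ ‖a n‖ := htop.eventually_ge_atTop 1
      have hnorm1 : ‖z‖ = 1 := by
        have h1 : Filter.Tendsto (fun n => ‖c (φ n)‖) atTop (𝓝 ‖z‖) :=
          (continuous_norm.tendsto z).comp hcz
        have h2 : ∀ᶠ n in atTop, ‖c (φ n)‖ = 1 := by
          have := hφ.tendsto_atTop.eventually hev
          filter_upwards [this] with n hn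
          have h0 : a (φ n) ≠ 0 := by
            intro hz0; rw [hz0, norm_zero] at hn; linarith
          simp only [hc, norm_smul, norm_inv, norm_norm]
          exact inv_mul_cancel₀ (norm_ne_zero_iff.mpr h0)
        have h3 : Filter.Tendsto (fun n => ‖c (φ n)‖) atTop (𝓝 1) := by
          rw [Filter.tendsto_congr' h2]; exact tendsto_const_nhds
        exact tendsto_nhds_unique h1 h3
      -- ‖a n‖⁻¹ • b n → -z along φ
      have hinv0 : Filter.Tendsto (fun n => ‖a n‖⁻¹) atTop (𝓝 0) :=
        tendsto_inv_atTop_zero.comp htop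
      have hsmul_u : Filter.Tendsto (fun n => ‖a n‖⁻¹ • u n) atTop (𝓝 0) := by
        have := hinv0.smul hux
        simpa using this
      have hbz : Filter.Tendsto (fun n => ‖a (φ n)‖⁻¹ • b (φ n)) atTop (𝓝 (-z)) := by
        have heq : (fun n => ‖a (φ n)‖⁻¹ • b (φ n)) =
            fun n => ‖a (φ n)‖⁻¹ • u (φ n) - c (φ n) := by
          funext n
          simp only [hc, hab (φ n), smul_add]
          abel
        rw [heq]
        have h1 : Filter.Tendsto (fun n => ‖a (φ n)‖⁻¹ • u (φ n)) atTop (𝓝 0) :=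
          hsmul_u.comp hφ.tendsto_atTop
        have := h1.sub hcz
        simpa using this
      have hzK : -z ∈ K :=
        hKclosed.mem_of_tendsto hbz (Filter.Eventually.of_forall fun n =>
          hKcone _ (inv_nonneg.mpr (norm_nonneg _)) _ (hb (φ n)))
      have : z ∈ closure (coneGen D) ∩ (-K) := ⟨hzC, Set.mem_neg.mpr (by simpa using hzK)⟩
      rw [h] at this
      rw [this] at hnorm1
      simp at hnorm1
end

section
/- Let X ⊆ ℝ^n be nonempty, f : ℝ^n → ℝ^m, K ⊆ ℝ^m a closed convex cone, and ε ∈ ℝ^m_+. A point x̄ ∈ X is an ε-efficient solution if and only if cone[f(X) − (f(x̄) − ε)] ∩ (−K) = {0}. -/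
open Set Pointwise

/-- Let `X ⊆ ℝ^n` be nonempty, `f : ℝ^n → ℝ^m`, `K ⊆ ℝ^m` a closed convex cone,
and `ε ∈ ℝ^m_+`. A point `xbar ∈ X` is an ε-efficient solution iff
`cone [f(X) - (f(xbar) - ε)] ∩ (-K) = {0}`. -/
theorem stmt_1 {n m : ℕ} (X : Set (Fin n → ℝ)) (hX : X.Nonempty)
    (f : (Fin n → ℝ) → (Fin m → ℝ))
    (K : Set (Fin m → ℝ)) (hKne : K.Nonempty)
    (hKcone : ∀ t : ℝ, 0 ≤ t → ∀ v ∈ K, t • v ∈ K)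
    (hKclosed : IsClosed K)
    (hKconvex : Convex ℝ K)
    (ε : Fin m → ℝ) (hε : ∀ i, 0 ≤ ε i)
    (xbar : Fin n → ℝ) (hxbar : xbar ∈ X) :
    (¬ ∃ y ∈ X, f xbar - ε - f y ∈ K ∧ f y ≠ f xbar - ε) ↔
      coneGen ((fun x => f x - (f xbar - ε)) '' X) ∩ (-K) = {0} := by
  have h0K : (0 : Fin m → ℝ) ∈ K := by
    obtain ⟨v, hv⟩ := hKne
    simpa using hKcone 0 le_rfl v hv
  constructor
  · intro hne
    apply Set.eq_singleton_iff_unique_mem.mpr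
    constructor
    · constructor
      · exact ⟨0, le_rfl, f xbar - (f xbar - ε), ⟨xbar, hxbar, rfl⟩, by simp⟩
      · simpa using h0K
    · rintro x ⟨⟨t, ht, d, ⟨y, hy, rfl⟩, rfl⟩, hxK⟩
      rcases eq_or_lt_of_le ht with ht0 | ht0
      · simp [← ht0]
      · have hd : f y - (f xbar - ε) ∈ -K := by
          have : t⁻¹ • (-(t • (f y - (f xbar - ε)))) ∈ K := by
            apply hKcone _ (by positivity)
            simpa [Set.mem_neg] using hxK
          rw [smul_neg, smul_smul, inv_mul_cancel₀ ht0.ne', one_smul] at this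
          simpa [Set.mem_neg] using this
        have hK' : f xbar - ε - f y ∈ K := by
          have : -(f y - (f xbar - ε)) ∈ K := by simpa [Set.mem_neg] using hd
          simpa [neg_sub] using this
        have heq : f y = f xbar - ε := by
          by_contra hne'
          exact hne ⟨y, hy, hK', hne'⟩
        simp [heq]
  · intro hcone ⟨y, hy, hK', hne'⟩
    have hmem : f y - (f xbar - ε) ∈ coneGen ((fun x => f x - (f xbar - ε)) '' X) ∩ (-K) := by
      refine ⟨⟨1, zero_le_one, _, ⟨y, hy, rfl⟩, (one_smul _ _).symm⟩, ?_⟩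
      rw [Set.mem_neg]
      simpa [neg_sub] using hK'
    rw [hcone] at hmem
    exact hne' (by simpa [sub_eq_zero] using hmem)
end

section
/- Let X ⊆ ℝ^n be nonempty, f : ℝ^n → ℝ^m, K ⊆ ℝ^m a pointed closed convex cone (K ∩ (−K) = {0}), ε ∈ ℝ^m_+, and x̄ ∈ X. Then cone[f(X) − (f(x̄) − ε)] ∩ (−K) = {0} if and only if cone[f(X) + K − (f(x̄) − ε)] ∩ (−K) = {0}. -/
open Set Pointwise

/-- Let `X ⊆ ℝ^n` be nonempty, `f : ℝ^n → ℝ^m`, `K ⊆ ℝ^m` a pointed closed convex cone,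
`ε ∈ ℝ^m_+`, and `xbar ∈ X`. Then `cone [f(X) - (f(xbar) - ε)] ∩ (-K) = {0}` iff
`cone [f(X) + K - (f(xbar) - ε)] ∩ (-K) = {0}`. -/
theorem stmt_2 {n m : ℕ} (X : Set (Fin n → ℝ)) (hX : X.Nonempty)
    (f : (Fin n → ℝ) → (Fin m → ℝ))
    (K : Set (Fin m → ℝ)) (hKne : K.Nonempty)
    (hKcone : ∀ t : ℝ, 0 ≤ t → ∀ v ∈ K, t • v ∈ K)
    (hKclosed : IsClosed K)
    (hKconvex : Convex ℝ K)
    (hKpointed : K ∩ (-K) = {0})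
    (ε : Fin m → ℝ) (hε : ∀ i, 0 ≤ ε i)
    (xbar : Fin n → ℝ) (hxbar : xbar ∈ X) :
    coneGen ((fun x => f x - (f xbar - ε)) '' X) ∩ (-K) = {0} ↔
      coneGen (((fun x => f x - (f xbar - ε)) '' X) + K) ∩ (-K) = {0} := by
  set A : Set (Fin m → ℝ) := (fun x => f x - (f xbar - ε)) '' X with hA
  obtain ⟨v0, hv0⟩ := hKne
  have h0K : (0 : Fin m → ℝ) ∈ K := by
    have := hKcone 0 le_rfl v0 hv0
    simpa using this
  have hKadd : ∀ a ∈ K, ∀ b ∈ K, a + b ∈ K := by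
    intro a ha b hb
    have hmid : (1/2 : ℝ) • a + (1/2 : ℝ) • b ∈ K :=
      hKconvex ha hb (by norm_num) (by norm_num) (by norm_num)
    have := hKcone 2 (by norm_num) _ hmid
    have h2 : (2 : ℝ) • ((1/2 : ℝ) • a + (1/2 : ℝ) • b) = a + b := by
      rw [smul_add, smul_smul, smul_smul]; norm_num
    rwa [h2] at this
  have hAne : A.Nonempty := ⟨_, xbar, hxbar, rfl⟩
  have h0neg : (0 : Fin m → ℝ) ∈ -K := by simpa using h0K
  have h0coneA : (0 : Fin m → ℝ) ∈ coneGen A := by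
    obtain ⟨a, ha⟩ := hAne
    exact ⟨0, le_rfl, a, ha, by simp⟩
  have h0coneAK : (0 : Fin m → ℝ) ∈ coneGen (A + K) := by
    obtain ⟨a, ha⟩ := hAne
    exact ⟨0, le_rfl, a + v0, add_mem_add ha hv0, by simp⟩
  constructor
  · intro h
    apply Set.Subset.antisymm
    · rintro y ⟨⟨t, ht, d, hd, rfl⟩, hyK⟩
      obtain ⟨a, ha, k, hk, rfl⟩ := hd
      rw [smul_add] at hyK ⊢
      have htk : t • k ∈ K := hKcone t ht k hk
      have hta : t • a ∈ coneGen A := ⟨t, ht, a, ha, rfl⟩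
      have htaK : t • a ∈ -K := by
        have hnegy : -(t • a + t • k) ∈ K := by
          rw [Set.mem_neg] at hyK; exact hyK
        have : -(t • a + t • k) + t • k ∈ K := hKadd _ hnegy _ htk
        rw [Set.mem_neg]
        convert this using 1
        abel
      have hta0 : t • a = 0 := by
        have : t • a ∈ coneGen A ∩ (-K) := ⟨hta, htaK⟩
        rwa [h, Set.mem_singleton_iff] at this
      have : t • a + t • k ∈ K ∩ (-K) := ⟨by rw [hta0, zero_add]; exact htk, hyK⟩
      rwa [hKpointed, Set.mem_singleton_iff] at this
    · rintro y hy
      rw [Set.mem_singleton_iff] at hy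
      subst hy
      exact ⟨h0coneAK, h0neg⟩
  · intro h
    apply Set.Subset.antisymm
    · rintro y ⟨⟨t, ht, d, hd, rfl⟩, hyK⟩
      have hd' : d ∈ A + K := by
        have : d + 0 ∈ A + K := add_mem_add hd h0K
        simpa using this
      have : t • d ∈ coneGen (A + K) ∩ (-K) := ⟨⟨t, ht, d, hd', rfl⟩, hyK⟩
      rwa [h, Set.mem_singleton_iff] at this
    · rintro y hy
      rw [Set.mem_singleton_iff] at hy
      subst hy
      exact ⟨h0coneA, h0neg⟩
end

section
/- (Necessary condition for ε-proper efficiency.) Let X ⊆ ℝ^n be nonempty, f : ℝ^n → ℝ^m with components f_1,…,f_m, K = ℝ^m_+, and ε ∈ ℝ^m_+. If x̄ ∈ X is an ε-properly efficient solution, then cl cone[f(X) + ℝ^m_+ − (f(x̄) − ε)] ∩ (−ℝ^m_+) = {0}. -/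
open Set Pointwise

/-- The nonnegative orthant `ℝ^m_+`. -/
def orthant (m : ℕ) : Set (Fin m → ℝ) := {x | ∀ i, 0 ≤ x i}

/-- `xbar` is an ε-efficient solution of the problem `min_K f(x) s.t. x ∈ X`, with the
ordering cone `K = ℝ^m_+`: `xbar ∈ X` and there is no `y ∈ X` with
`f(y) ≤ f(xbar) - ε` and `f(y) ≠ f(xbar) - ε`. -/
def IsEpsEff {n m : ℕ} (X : Set (Fin n → ℝ)) (f : (Fin n → ℝ) → (Fin m → ℝ))
    (ε : Fin m → ℝ) (xbar : Fin n → ℝ) : Prop :=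
  xbar ∈ X ∧ ¬ ∃ y ∈ X, f xbar - ε - f y ∈ orthant m ∧ f y ≠ f xbar - ε

/-- `xbar` is an ε-properly efficient solution (in the sense of Li and Wang / Liu, a
Geoffrion-type notion) of the problem `min f(x) s.t. x ∈ X` with ordering cone `ℝ^m_+`. -/
def IsEpsProperEff {n m : ℕ} (X : Set (Fin n → ℝ)) (f : (Fin n → ℝ) → (Fin m → ℝ))
    (ε : Fin m → ℝ) (xbar : Fin n → ℝ) : Prop :=
  IsEpsEff X f ε xbar ∧ ∃ M : ℝ, 0 < M ∧ ∀ i : Fin m, ∀ x ∈ X,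
    f x i < f xbar i - ε i → ∃ j : Fin m, f xbar j - ε j < f x j ∧
      (f xbar i - f x i - ε i) / (f x j - f xbar j + ε j) ≤ M

/-- Necessary condition for ε-proper efficiency: if `xbar ∈ X` is an ε-properly efficient
solution, then `cl cone [f(X) + ℝ^m_+ - (f(xbar) - ε)] ∩ (-ℝ^m_+) = {0}`. -/
theorem stmt_3 {n m : ℕ} (X : Set (Fin n → ℝ)) (hX : X.Nonempty)
    (f : (Fin n → ℝ) → (Fin m → ℝ))
    (ε : Fin m → ℝ) (hε : ∀ i, 0 ≤ ε i)
    (xbar : Fin n → ℝ) (hxbar : xbar ∈ X)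
    (h : IsEpsProperEff X f ε xbar) :
    closure (coneGen (((fun x => f x - (f xbar - ε)) '' X) + orthant m)) ∩ (-(orthant m))
      = {0} := by
  obtain ⟨-, M, hM, hprop⟩ := h
  ext v
  simp only [mem_inter_iff, mem_singleton_iff]
  constructor
  · rintro ⟨hv1, hv2⟩
    have hvle : ∀ j, v j ≤ 0 := by
      intro j
      have hneg : -v ∈ orthant m := by rwa [Set.mem_neg] at hv2
      have := hneg j
      simpa using this
    by_contra hv0
    obtain ⟨i, hi⟩ : ∃ i, v i < 0 := by
      by_contra hall
      push_neg at hall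
      exact hv0 (funext fun j => le_antisymm (hvle j) (hall j))
    set δ : ℝ := -v i / (2 * (M + 1)) with hδdef
    have hδ : 0 < δ := by
      apply div_pos (by linarith)
      linarith
    obtain ⟨u, huS, hud⟩ := Metric.mem_closure_iff.mp hv1 δ hδ
    obtain ⟨t, ht, d, hd, rfl⟩ := huS
    rw [Set.mem_add] at hd
    obtain ⟨p, hp, c, hc, rfl⟩ := hd
    obtain ⟨x, hxX', rfl⟩ := hp
    -- componentwise distance bounds
    have hdist : ∀ j, |v j - (t • ((f x - (f xbar - ε)) + c)) j| < δ := by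
      intro j
      have h1 : dist (v j) ((t • ((f x - (f xbar - ε)) + c)) j) ≤
          dist v (t • ((f x - (f xbar - ε)) + c)) := dist_le_pi_dist _ _ j
      have := lt_of_le_of_lt h1 hud
      rwa [Real.dist_eq] at this
    set b : Fin m → ℝ := fun j => f x j - f xbar j + ε j with hbdef
    have hu : ∀ j, (t • ((f x - (f xbar - ε)) + c)) j = t * (b j + c j) := by
      intro j
      simp only [hbdef, Pi.smul_apply, Pi.add_apply, Pi.sub_apply, smul_eq_mul]
      ring
    have hui : t * (b i + c i) < v i + δ := by
      have := hdist i
      rw [hu i] at this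
      have := abs_lt.mp this
      linarith [this.1]
    have hviδ : v i + δ < 0 := by
      have : δ < -v i := by
        rw [hδdef]
        rw [div_lt_iff₀ (by linarith)]
        nlinarith
      linarith
    have huineg : t * (b i + c i) < 0 := lt_trans hui hviδ
    have htpos : 0 < t := by
      rcases lt_or_eq_of_le ht with h' | h'
      · exact h'
      · exfalso; rw [← h'] at huineg; simp at huineg
    have hbci : b i + c i < 0 := by
      by_contra hcon
      push_neg at hcon
      nlinarith
    have hbi : b i < 0 := by
      have := hc i
      linarith
    have hfxi : f x i < f xbar i - ε i := by
      have : f x i - f xbar i + ε i < 0 := hbi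
      linarith
    obtain ⟨j, hj1, hj2⟩ := hprop i x hxX' hfxi
    have hbj : 0 < b j := by
      simp only [hbdef]
      linarith
    have hMbj : -b i ≤ M * b j := by
      have : (f xbar i - f x i - ε i) ≤ M * (f x j - f xbar j + ε j) := by
        rw [div_le_iff₀ (by simpa [hbdef] using hbj)] at hj2
        linarith
      simp only [hbdef]
      linarith
    -- lower bound on u j
    have hujlb : -(t * (b i + c i)) ≤ M * (t * (b j + c j)) := by
      have h1 : -(b i + c i) ≤ M * (b j + c j) := by
        have hcj := hc j
        have hci := hc i
        nlinarith
      nlinarith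
    have huj : t * (b j + c j) < v j + δ := by
      have := hdist j
      rw [hu j] at this
      have := abs_lt.mp this
      linarith [this.1]
    have hujδ : t * (b j + c j) < δ := lt_of_lt_of_le huj (by linarith [hvle j])
    -- but -(u i) > (2M+1)δ, so u j ≥ -(u i)/M > δ
    have hkey : (2 * M + 1) * δ < -(t * (b i + c i)) := by
      have hvi : -v i = 2 * (M + 1) * δ := by
        rw [hδdef]
        field_simp
      nlinarith
    nlinarith [mul_lt_mul_of_pos_left hujδ hM]
  · rintro rfl
    constructor
    · apply subset_closure
      refine ⟨0, le_refl 0, (f xbar - (f xbar - ε)) + 0, ?_, by simp⟩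
      rw [Set.mem_add]
      exact ⟨f xbar - (f xbar - ε), ⟨xbar, hxbar, rfl⟩, 0, fun j => le_refl 0, rfl⟩
    · rw [Set.mem_neg, neg_zero]
      exact fun j => le_refl 0
end

section
/- (Sufficient condition for ε-proper efficiency.) Let X ⊆ ℝ^n be nonempty, f : ℝ^n → ℝ^m with components f_1,…,f_m, K = ℝ^m_+, and ε ∈ ℝ^m_+. If x̄ ∈ X satisfies cl cone[f(X) + ℝ^m_+ − (f(x̄) − ε)] ∩ (−ℝ^m_+) = {0}, then x̄ is an ε-properly efficient solution. -/
open Set Pointwise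

/-- Sufficient condition for ε-proper efficiency: if `xbar ∈ X` satisfies
`cl cone [f(X) + ℝ^m_+ - (f(xbar) - ε)] ∩ (-ℝ^m_+) = {0}`, then `xbar` is an ε-properly
efficient solution. -/
theorem stmt_4 {n m : ℕ} (X : Set (Fin n → ℝ)) (hX : X.Nonempty)
    (f : (Fin n → ℝ) → (Fin m → ℝ))
    (ε : Fin m → ℝ) (hε : ∀ i, 0 ≤ ε i)
    (xbar : Fin n → ℝ) (hxbar : xbar ∈ X)
    (h : closure (coneGen (((fun x => f x - (f xbar - ε)) '' X) + orthant m)) ∩ (-(orthant m))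
      = {0}) :
    IsEpsProperEff X f ε xbar := by
  classical
  set S : Set (Fin m → ℝ) := ((fun x => f x - (f xbar - ε)) '' X) + orthant m with hSdef
  have hzero : (0 : Fin m → ℝ) ∈ orthant m := fun i => le_refl 0
  have hmemS : ∀ y ∈ X, ∀ d, d ∈ orthant m → (f y - (f xbar - ε)) + d ∈ S := by
    intro y hy d hd
    exact Set.add_mem_add ⟨y, hy, rfl⟩ hd
  constructor
  · refine ⟨hxbar, ?_⟩
    rintro ⟨y, hy, hor, hne⟩
    have hv : f y - (f xbar - ε) ∈ closure (coneGen S) ∩ -(orthant m) := by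
      constructor
      · apply subset_closure
        exact ⟨1, zero_le_one, (f y - (f xbar - ε)) + 0, hmemS y hy 0 hzero, by simp⟩
      · simp only [Set.mem_neg]
        have : -(f y - (f xbar - ε)) = f xbar - ε - f y := by abel
        rw [this]; exact hor
    rw [h] at hv
    exact hne (sub_eq_zero.mp hv)
  · by_contra hM
    push_neg at hM
    -- P i M : there's a bad point for index i and constant M
    set P : Fin m → ℝ → Prop := fun i M => ∃ x ∈ X, f x i < f xbar i - ε i ∧
      ∀ j, f xbar j - ε j < f x j →
        M < (f xbar i - f x i - ε i) / (f x j - f xbar j + ε j) with hPdef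
    have hP : ∀ M : ℝ, 0 < M → ∃ i, P i M := by
      intro M hM0
      obtain ⟨i, x, hx, h1, h2⟩ := hM M hM0
      exact ⟨i, x, hx, h1, h2⟩
    have hanti : ∀ i M M', M ≤ M' → P i M' → P i M := by
      rintro i M M' hle ⟨x, hx, h1, h2⟩
      exact ⟨x, hx, h1, fun j hj => lt_of_le_of_lt hle (h2 j hj)⟩
    -- pigeonhole: one i works for all M
    have hfix : ∃ i, ∀ M : ℝ, 0 < M → P i M := by
      by_contra hc
      push_neg at hc
      choose g hg1 hg2 using hc
      have hm0 : 0 < m := by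
        obtain ⟨i, _⟩ := hP 1 one_pos
        exact i.pos
      have : Nonempty (Fin m) := ⟨⟨0, hm0⟩⟩
      set M0 : ℝ := Finset.univ.sup' (Finset.univ_nonempty) g with hM0def
      have hM0pos : 0 < M0 := lt_of_lt_of_le (hg1 (Classical.arbitrary _))
        (Finset.le_sup' g (Finset.mem_univ _))
      obtain ⟨i, hi⟩ := hP M0 hM0pos
      exact hg2 i (hanti i (g i) M0 (Finset.le_sup' g (Finset.mem_univ i)) hi)
    obtain ⟨i, hi⟩ := hfix
    -- show -(e_i) ∈ closure (coneGen S)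
    have hcl : (-(Pi.single i 1) : Fin m → ℝ) ∈ closure (coneGen S) := by
      rw [Metric.mem_closure_iff]
      intro δ hδ
      set M : ℝ := max (1/δ) 1 with hMdef
      have hMpos : (0:ℝ) < M := lt_of_lt_of_le one_pos (le_max_right _ _)
      have hMδ : 1 / M ≤ δ := by
        have h1 : 1 / M ≤ 1 / (1/δ) :=
          one_div_le_one_div_of_le (by positivity) (le_max_left _ _)
        rwa [one_div_one_div] at h1
      obtain ⟨x, hx, h1, h2⟩ := hi M hMpos
      set Δ : ℝ := f xbar i - ε i - f x i with hΔdef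
      have hΔpos : 0 < Δ := by rw [hΔdef]; linarith
      set d : Fin m → ℝ := fun j => if j = i then 0 else max 0 (f xbar j - ε j - f x j)
        with hddef
      have hdi : d i = 0 := if_pos rfl
      have hdj : ∀ j, j ≠ i → d j = max 0 (f xbar j - ε j - f x j) := fun j hj => if_neg hj
      have hd : d ∈ orthant m := by
        intro j
        rcases eq_or_ne j i with rfl | hj
        · rw [hdi]
        · rw [hdj j hj]; exact le_max_left _ _
      set w : Fin m → ℝ := Δ⁻¹ • ((f x - (f xbar - ε)) + d) with hwdef
      have hw : w ∈ coneGen S :=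
        ⟨Δ⁻¹, le_of_lt (inv_pos.mpr hΔpos), _, hmemS x hx d hd, rfl⟩
      have happ : ∀ j, w j = Δ⁻¹ * (f x j - (f xbar j - ε j) + d j) := fun j => rfl
      refine ⟨w, hw, ?_⟩
      rw [dist_pi_lt_iff hδ]
      intro j
      rcases eq_or_ne j i with rfl | hj
      · have hwi : w j = -1 := by
          rw [happ, hdi]
          have hnum : f x j - (f xbar j - ε j) + 0 = -Δ := by rw [hΔdef]; ring
          rw [hnum]
          field_simp
        simp only [hwi, Pi.neg_apply, Pi.single_eq_same, Real.dist_eq]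
        simpa using hδ
      · have hwj : w j = Δ⁻¹ * max 0 (f x j - f xbar j + ε j) := by
          rw [happ, hdj j hj]
          congr 1
          rcases le_total (f x j - f xbar j + ε j) 0 with hle | hle
          · rw [max_eq_right (by linarith : (0:ℝ) ≤ f xbar j - ε j - f x j),
              max_eq_left hle]
            ring
          · rw [max_eq_left (by linarith : f xbar j - ε j - f x j ≤ 0),
              max_eq_right hle]
            ring
        have hwj0 : 0 ≤ w j := by
          rw [hwj]
          exact mul_nonneg (le_of_lt (inv_pos.mpr hΔpos)) (le_max_left _ _)
        have hwjlt : w j < δ := by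
          rcases le_or_gt (f x j - f xbar j + ε j) 0 with hle | hlt
          · rw [hwj, max_eq_left hle]
            simpa using hδ
          · have hjj : f xbar j - ε j < f x j := by linarith
            have h3 := h2 j hjj
            have hnum : f xbar i - f x i - ε i = Δ := by rw [hΔdef]; ring
            rw [hnum] at h3
            have h4 : M * (f x j - f xbar j + ε j) < Δ := (lt_div_iff₀ hlt).mp h3
            have h5 : w j < 1 / M := by
              rw [hwj, max_eq_right (le_of_lt hlt), inv_mul_eq_div,
                div_lt_div_iff₀ hΔpos hMpos]
              nlinarith
            linarith
        have hzj : (-(Pi.single i 1) : Fin m → ℝ) j = 0 := by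
          simp [Pi.single_eq_of_ne hj]
        rw [hzj, Real.dist_eq, abs_sub_comm, abs_of_nonneg (by linarith)]
        linarith
    have hmem : (-(Pi.single i 1) : Fin m → ℝ) ∈ closure (coneGen S) ∩ -(orthant m) := by
      refine ⟨hcl, ?_⟩
      simp only [Set.mem_neg, neg_neg]
      intro j
      rcases eq_or_ne j i with rfl | hj
      · simp
      · simp [Pi.single_eq_of_ne hj]
    rw [h] at hmem
    have := congrFun hmem i
    simp [Pi.single_eq_same] at this
end

section
/- Let X ⊆ ℝ^n be a nonempty polyhedral convex set, f : ℝ^n → ℝ^m an affine map, and K ⊆ ℝ^m a pointed polyhedral convex cone (K ∩ (−K) = {0}). Then a point x̄ ∈ X is a Benson properly efficient solution, i.e., cl cone[f(X) + K − f(x̄)] ∩ (−K) = {0}, if and only if x̄ is an efficient solution, i.e., there exists no y ∈ X with f(x̄) − f(y) ∈ K and f(y) ≠ f(x̄). -/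
open Set Pointwise

def IsHPoly {d : ℕ} (S : Set (Fin d → ℝ)) : Prop :=
  ∃ (p : ℕ) (a : Fin p → Fin d → ℝ) (b : Fin p → ℝ),
    S = {x | ∀ i, ∑ j, a i j * x j ≤ b i}

lemma isHPoly_congr {d : ℕ} {S T : Set (Fin d → ℝ)} (h : S = T) (hT : IsHPoly T) :
    IsHPoly S := h ▸ hT

lemma isHPoly_closed {d : ℕ} {S : Set (Fin d → ℝ)} (h : IsHPoly S) : IsClosed S := by
  obtain ⟨p, a, b, rfl⟩ := h
  have : {x : Fin d → ℝ | ∀ i, ∑ j, a i j * x j ≤ b i}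
      = ⋂ i, {x | ∑ j, a i j * x j ≤ b i} := by
    ext x; simp [Set.mem_iInter, Set.mem_setOf_eq]
  rw [this]
  refine isClosed_iInter fun i => ?_
  exact isClosed_le (by continuity) continuous_const

lemma isHPoly_of_fintype {d : ℕ} (ι : Type) [Fintype ι] (a : ι → Fin d → ℝ) (b : ι → ℝ) :
    IsHPoly {x : Fin d → ℝ | ∀ i, ∑ j, a i j * x j ≤ b i} := by
  refine ⟨Fintype.card ι, fun k => a ((Fintype.equivFin ι).symm k),
    fun k => b ((Fintype.equivFin ι).symm k), ?_⟩
  ext x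
  simp only [mem_setOf_eq]
  exact ⟨fun h k => h _, fun h i => by simpa using h (Fintype.equivFin ι i)⟩

lemma fm_core {ι : Type} [Fintype ι] (g c b : ι → ℝ) :
    (∃ t : ℝ, ∀ i, g i + c i * t ≤ b i) ↔
      ((∀ i, c i = 0 → g i ≤ b i) ∧
        ∀ i k, c i < 0 → 0 < c k → c k * g i - c i * g k ≤ c k * b i - c i * b k) := by
  classical
  constructor
  · rintro ⟨t, ht⟩
    refine ⟨fun i h0 => by have := ht i; rw [h0] at this; linarith, fun i k hi hk => ?_⟩
    have h1 := ht i; have h2 := ht k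
    nlinarith [mul_le_mul_of_nonneg_left h1 hk.le,
      mul_le_mul_of_nonneg_left h2 (neg_nonneg.2 hi.le)]
  · rintro ⟨h0, hpair⟩
    set Nn : Finset ι := Finset.univ.filter (fun i => c i < 0) with hNndef
    set P : Finset ι := Finset.univ.filter (fun i => 0 < c i) with hPdef
    set ℓ : ι → ℝ := fun i => (b i - g i) / c i with hldef
    have hmemN : ∀ i, c i < 0 → i ∈ Nn := fun i h => by simp [hNndef, h]
    have hmemP : ∀ i, 0 < c i → i ∈ P := fun i h => by simp [hPdef, h]
    have hNc : ∀ i ∈ Nn, c i < 0 := fun i h => by simpa [hNndef] using h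
    have hPc : ∀ i ∈ P, 0 < c i := fun i h => by simpa [hPdef] using h
    have hlow : ∀ (t : ℝ) i, c i < 0 → ℓ i ≤ t → g i + c i * t ≤ b i := by
      intro t i hi hle
      have h1 : t * c i ≤ ℓ i * c i := mul_le_mul_of_nonpos_right hle hi.le
      have h2 : ℓ i * c i = b i - g i := div_mul_cancel₀ _ hi.ne
      linarith [h1, h2.le, mul_comm (c i) t ▸ h1]
    have hup : ∀ (t : ℝ) i, 0 < c i → t ≤ ℓ i → g i + c i * t ≤ b i := by
      intro t i hi hle
      have h1 : t * c i ≤ ℓ i * c i := mul_le_mul_of_nonneg_right hle hi.le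
      have h2 : ℓ i * c i = b i - g i := div_mul_cancel₀ _ hi.ne'
      nlinarith
    have hlu : ∀ i k, c i < 0 → 0 < c k → ℓ i ≤ ℓ k := by
      intro i k hi hk
      have hp := hpair i k hi hk
      have h2 : ℓ i * c i = b i - g i := div_mul_cancel₀ _ hi.ne
      have h3 : ℓ k * c k = b k - g k := div_mul_cancel₀ _ hk.ne'
      nlinarith [mul_pos (neg_pos.2 hi) hk]
    by_cases hNe : Nn.Nonempty
    · refine ⟨Nn.sup' hNe ℓ, fun i => ?_⟩
      rcases lt_trichotomy (c i) 0 with hi | hi | hi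
      · exact hlow _ i hi (Finset.le_sup' ℓ (hmemN i hi))
      · have := h0 i hi; rw [hi]; linarith
      · refine hup _ i hi (Finset.sup'_le hNe ℓ fun j hj => hlu j i (hNc j hj) hi)
    · by_cases hPe : P.Nonempty
      · refine ⟨P.inf' hPe ℓ, fun i => ?_⟩
        rcases lt_trichotomy (c i) 0 with hi | hi | hi
        · exact absurd (hmemN i hi) (fun h => hNe ⟨i, h⟩)
        · have := h0 i hi; rw [hi]; linarith
        · exact hup _ i hi (Finset.inf'_le ℓ (hmemP i hi))
      · refine ⟨0, fun i => ?_⟩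
        rcases lt_trichotomy (c i) 0 with hi | hi | hi
        · exact absurd (hmemN i hi) (fun h => hNe ⟨i, h⟩)
        · have := h0 i hi; rw [hi]; linarith
        · exact absurd (hmemP i hi) (fun h => hPe ⟨i, h⟩)

lemma key (m : ℕ) : ∀ (d : ℕ) (ι : Type) [Fintype ι] (A : ι → Fin m → ℝ)
    (B : ι → Fin d → ℝ) (b : ι → ℝ),
    IsHPoly {y : Fin m → ℝ | ∃ x : Fin d → ℝ,
      ∀ i, (∑ k, A i k * y k) + (∑ j, B i j * x j) ≤ b i} := by
  intro d
  induction d with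
  | zero =>
    intro ι _ A B b
    have h : {y : Fin m → ℝ | ∃ x : Fin 0 → ℝ,
        ∀ i, (∑ k, A i k * y k) + (∑ j, B i j * x j) ≤ b i}
        = {y | ∀ i, ∑ k, A i k * y k ≤ b i} := by
      ext y
      simp only [mem_setOf_eq, Finset.univ_eq_empty, Finset.sum_empty, add_zero]
      exact ⟨fun ⟨x, hx⟩ => hx, fun h => ⟨fun j => 0, h⟩⟩
    exact isHPoly_congr h (isHPoly_of_fintype ι A b)
  | succ d IH =>
    intro ι _ A B b
    classical
    set c : ι → ℝ := fun i => B i (Fin.last d) with hc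
    set A' : ι ⊕ ι × ι → Fin m → ℝ := Sum.elim
      (fun i => if c i = 0 then A i else 0)
      (fun ik => if c ik.1 < 0 ∧ 0 < c ik.2 then
        (fun kk => c ik.2 * A ik.1 kk - c ik.1 * A ik.2 kk) else 0) with hA'
    set B' : ι ⊕ ι × ι → Fin d → ℝ := Sum.elim
      (fun i => if c i = 0 then (fun j => B i j.castSucc) else 0)
      (fun ik => if c ik.1 < 0 ∧ 0 < c ik.2 then
        (fun j => c ik.2 * B ik.1 j.castSucc - c ik.1 * B ik.2 j.castSucc) else 0) with hB'
    set b' : ι ⊕ ι × ι → ℝ := Sum.elim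
      (fun i => if c i = 0 then b i else 0)
      (fun ik => if c ik.1 < 0 ∧ 0 < c ik.2 then c ik.2 * b ik.1 - c ik.1 * b ik.2 else 0) with hb'
    have h : {y : Fin m → ℝ | ∃ x : Fin (d+1) → ℝ,
        ∀ i, (∑ k, A i k * y k) + (∑ j, B i j * x j) ≤ b i}
        = {y | ∃ x : Fin d → ℝ,
            ∀ i, (∑ k, A' i k * y k) + (∑ j, B' i j * x j) ≤ b' i} := by
      ext y
      simp only [mem_setOf_eq]
      have hsplit : ∀ (x' : Fin d → ℝ) (t : ℝ) (i : ι),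
          (∑ j : Fin (d+1), B i j * (Fin.snoc x' t : Fin (d+1) → ℝ) j)
          = (∑ j : Fin d, B i j.castSucc * x' j) + c i * t := by
        intro x' t i
        rw [Fin.sum_univ_castSucc]
        simp [Fin.snoc_castSucc, Fin.snoc_last, hc, mul_comm]
      have step1 : (∃ x : Fin (d+1) → ℝ,
          ∀ i, (∑ k, A i k * y k) + (∑ j, B i j * x j) ≤ b i)
          ↔ ∃ x' : Fin d → ℝ, ∃ t : ℝ,
            ∀ i, ((∑ k, A i k * y k) + (∑ j : Fin d, B i j.castSucc * x' j)) + c i * t ≤ b i := by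
        constructor
        · rintro ⟨x, hx⟩
          refine ⟨Fin.init x, x (Fin.last d), fun i => ?_⟩
          have h2 := hx i
          rw [← Fin.snoc_init_self x, hsplit] at h2
          linarith
        · rintro ⟨x', t, hx⟩
          refine ⟨Fin.snoc x' t, fun i => ?_⟩
          rw [hsplit]
          linarith [hx i]
      have equiv2 : ∀ x' : Fin d → ℝ,
          ((∀ i', (∑ k, A' i' k * y k) + (∑ j, B' i' j * x' j) ≤ b' i')
            ↔ ((∀ i, c i = 0 →
                (∑ k, A i k * y k) + (∑ j : Fin d, B i j.castSucc * x' j) ≤ b i) ∧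
              (∀ i k, c i < 0 → 0 < c k →
                c k * ((∑ kk, A i kk * y kk) + ∑ j : Fin d, B i j.castSucc * x' j)
                  - c i * ((∑ kk, A k kk * y kk) + ∑ j : Fin d, B k j.castSucc * x' j)
                  ≤ c k * b i - c i * b k))) := by
        intro x'
        have e1 : ∀ i k : ι, ∑ kk, (c k * A i kk - c i * A k kk) * y kk
            = c k * ∑ kk, A i kk * y kk - c i * ∑ kk, A k kk * y kk := by
          intro i k
          rw [Finset.mul_sum, Finset.mul_sum, ← Finset.sum_sub_distrib]
          exact Finset.sum_congr rfl fun _ _ => by ring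
        have e2 : ∀ i k : ι, ∑ j : Fin d, (c k * B i j.castSucc - c i * B k j.castSucc) * x' j
            = c k * ∑ j : Fin d, B i j.castSucc * x' j
              - c i * ∑ j : Fin d, B k j.castSucc * x' j := by
          intro i k
          rw [Finset.mul_sum, Finset.mul_sum, ← Finset.sum_sub_distrib]
          exact Finset.sum_congr rfl fun _ _ => by ring
        constructor
        · intro hall
          constructor
          · intro i h0
            have := hall (Sum.inl i)
            simpa [hA', hB', hb', h0] using this
          · intro i k hik hk
            have := hall (Sum.inr (i, k))
            simp only [hA', hB', hb', Sum.elim_inr, if_pos (And.intro hik hk)] at this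
            rw [e1, e2] at this
            linarith
        · rintro ⟨h0, hp⟩
          rintro (i | ⟨i, k⟩)
          · by_cases h : c i = 0
            · simpa [hA', hB', hb', h] using h0 i h
            · simp [hA', hB', hb', h]
          · by_cases h : c i < 0 ∧ 0 < c k
            · have := hp i k h.1 h.2
              simp only [hA', hB', hb', Sum.elim_inr, if_pos h]
              rw [e1, e2]
              linarith
            · simp [hA', hB', hb', h]
      rw [step1]
      constructor
      · rintro ⟨x', t, hx⟩
        exact ⟨x', (equiv2 x').mpr ((fm_core _ c b).mp ⟨t, hx⟩)⟩
      · rintro ⟨x', hx⟩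
        obtain ⟨t, ht⟩ := (fm_core _ c b).mpr ((equiv2 x').mp hx)
        exact ⟨x', t, ht⟩
    exact isHPoly_congr h (IH (ι ⊕ ι × ι) A' B' b')

lemma key' (m : ℕ) (κ : Type) [Fintype κ] (ι : Type) [Fintype ι]
    (A : ι → Fin m → ℝ) (B : ι → κ → ℝ) (b : ι → ℝ) :
    IsHPoly {y : Fin m → ℝ | ∃ x : κ → ℝ,
      ∀ i, (∑ k, A i k * y k) + (∑ j, B i j * x j) ≤ b i} := by
  classical
  set e := Fintype.equivFin κ with he
  have h : {y : Fin m → ℝ | ∃ x : κ → ℝ, ∀ i, (∑ k, A i k * y k) + (∑ j, B i j * x j) ≤ b i}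
      = {y : Fin m → ℝ | ∃ x : Fin (Fintype.card κ) → ℝ,
          ∀ i, (∑ k, A i k * y k) + (∑ j, B i (e.symm j) * x j) ≤ b i} := by
    ext y
    simp only [mem_setOf_eq]
    constructor
    · rintro ⟨x, hx⟩
      refine ⟨fun j => x (e.symm j), fun i => ?_⟩
      have : (∑ j, B i (e.symm j) * x (e.symm j)) = ∑ j, B i j * x j :=
        Equiv.sum_comp e.symm (fun j => B i j * x j)
      rw [this]; exact hx i
    · rintro ⟨x, hx⟩
      refine ⟨fun k => x (e k), fun i => ?_⟩
      have : (∑ j, B i (e.symm j) * x j) = ∑ k, B i k * x (e k) := by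
        rw [← Equiv.sum_comp e (fun j => B i (e.symm j) * x j)]
        simp
      have h2 := hx i
      rw [this] at h2; exact h2
  exact isHPoly_congr h (key m (Fintype.card κ) ι A _ b)

/-- In a linear vector optimization problem (polyhedral convex `X`, affine `f`, pointed
polyhedral convex cone `K`), a point `x̄ ∈ X` is a Benson properly efficient solution iff it
is an efficient solution. -/
theorem stmt_8 {n m : ℕ} (X : Set (Fin n → ℝ)) (hXne : X.Nonempty)
    (hXpoly : ∃ (p : ℕ) (a : Fin p → Fin n → ℝ) (b : Fin p → ℝ),
      X = {x | ∀ i, ∑ j, a i j * x j ≤ b i})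
    (f : (Fin n → ℝ) →ᵃ[ℝ] (Fin m → ℝ))
    (K : Set (Fin m → ℝ))
    (hKpoly : ∃ (q : ℕ) (v : Fin q → Fin m → ℝ),
      K = {x | ∃ t : Fin q → ℝ, (∀ j, 0 ≤ t j) ∧ x = ∑ j, t j • v j})
    (hKpointed : K ∩ (-K) = {0})
    (xbar : Fin n → ℝ) (hxbar : xbar ∈ X) :
    closure (coneGen (((fun x => f x - f xbar) '' X) + K)) ∩ (-K) = {0} ↔
      ¬ ∃ y ∈ X, f xbar - f y ∈ K ∧ f y ≠ f xbar := by
  classical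
  obtain ⟨p, a, b, hX⟩ := hXpoly
  obtain ⟨q, v, hK⟩ := hKpoly
  set A : Set (Fin m → ℝ) := ((fun x => f x - f xbar) '' X) + K with hA
  have hK0 : (0 : Fin m → ℝ) ∈ K := by
    rw [hK]; exact ⟨fun _ => 0, fun _ => le_refl 0, by simp⟩
  have hKadd : ∀ k₁ k₂, k₁ ∈ K → k₂ ∈ K → k₁ + k₂ ∈ K := by
    intro k₁ k₂ h₁ h₂
    rw [hK] at h₁ h₂ ⊢
    obtain ⟨t₁, ht₁, rfl⟩ := h₁
    obtain ⟨t₂, ht₂, rfl⟩ := h₂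
    exact ⟨fun j => t₁ j + t₂ j, fun j => add_nonneg (ht₁ j) (ht₂ j), by
      rw [← Finset.sum_add_distrib]
      exact Finset.sum_congr rfl fun j _ => (add_smul _ _ _).symm⟩
  have hKsmul : ∀ (s : ℝ) k, 0 ≤ s → k ∈ K → s • k ∈ K := by
    intro s k hs hk
    rw [hK] at hk ⊢
    obtain ⟨t, ht, rfl⟩ := hk
    exact ⟨fun j => s * t j, fun j => mul_nonneg hs (ht j), by
      rw [Finset.smul_sum]
      exact Finset.sum_congr rfl fun j _ => (smul_smul _ _ _)⟩
  have hfy : ∀ y : Fin n → ℝ, f y - f xbar = f.linear (y - xbar) := by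
    intro y
    have h1 : f y = f.linear y + f 0 := by
      conv_lhs => rw [AffineMap.decomp f]
      simp
    have h2 : f xbar = f.linear xbar + f 0 := by
      conv_lhs => rw [AffineMap.decomp f]
      simp
    rw [h1, h2, map_sub]; abel
  have h0A : (0 : Fin m → ℝ) ∈ A := by
    rw [hA, Set.mem_add]
    exact ⟨f xbar - f xbar, ⟨xbar, hxbar, rfl⟩, 0, hK0, by simp⟩
  have hmemX : ∀ y : Fin n → ℝ, y ∈ X ↔ ∀ i, ∑ j, a i j * y j ≤ b i := by
    intro y; rw [hX]; rfl
  set b' : Fin p → ℝ := fun i => b i - ∑ j, a i j * xbar j with hb'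
  have hb'i : ∀ i, b' i = b i - ∑ j, a i j * xbar j := fun i => rfl
  -- readable description of coneGen A
  have hcone : coneGen A = {z : Fin m → ℝ | ∃ (u : Fin n → ℝ) (s : ℝ) (t : Fin q → ℝ),
      (∀ i, ∑ j, a i j * u j ≤ s * b' i) ∧ 0 ≤ s ∧ (∀ j, 0 ≤ t j) ∧
      z = f.linear u + ∑ j, t j • v j} := by
    ext z
    simp only [mem_setOf_eq]
    constructor
    · rintro ⟨s, hs, d, hd, rfl⟩
      rw [hA, Set.mem_add] at hd
      obtain ⟨w, hw, k, hk, hwk⟩ := hd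
      obtain ⟨y, hy, hyw⟩ := hw
      have hyw' : f y - f xbar = w := hyw
      rw [hK] at hk
      obtain ⟨t, ht, rfl⟩ := hk
      refine ⟨s • (y - xbar), s, fun j => s * t j, fun i => ?_, hs,
        fun j => mul_nonneg hs (ht j), ?_⟩
      · have h1 : ∑ j, a i j * (s • (y - xbar)) j
            = s * ((∑ j, a i j * y j) - ∑ j, a i j * xbar j) := by
          rw [mul_sub, Finset.mul_sum, Finset.mul_sum, ← Finset.sum_sub_distrib]
          refine Finset.sum_congr rfl fun j _ => ?_
          simp only [Pi.smul_apply, Pi.sub_apply, smul_eq_mul]; ring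
        rw [h1, hb'i]
        exact mul_le_mul_of_nonneg_left
          (sub_le_sub_right ((hmemX y).mp hy i) (∑ j, a i j * xbar j)) hs
      · rw [← hwk, smul_add, map_smul, Finset.smul_sum, ← hyw', hfy y]
        congr 1
        exact Finset.sum_congr rfl fun j _ => (smul_smul _ _ _)
    · rintro ⟨u, s, t, hu, hs, ht, rfl⟩
      rcases eq_or_lt_of_le hs with hs0 | hs0
      · refine ⟨1, zero_le_one, (f (xbar + u) - f xbar) + ∑ j, t j • v j, ?_, ?_⟩
        · rw [hA, Set.mem_add]
          refine ⟨f (xbar + u) - f xbar, ⟨xbar + u, ?_, rfl⟩, ∑ j, t j • v j, ?_, rfl⟩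
          · rw [hmemX]
            intro i
            have h1 : ∑ j, a i j * (xbar + u) j
                = (∑ j, a i j * xbar j) + ∑ j, a i j * u j := by
              rw [← Finset.sum_add_distrib]
              exact Finset.sum_congr rfl fun j _ => by simp [mul_add]
            have h2 := hu i
            rw [← hs0, zero_mul] at h2
            have h3 := (hmemX xbar).mp hxbar i
            rw [h1]
            linarith
          · rw [hK]; exact ⟨t, ht, rfl⟩
        · rw [one_smul, hfy (xbar + u)]
          congr 2
          abel
      · refine ⟨s, hs, (f (xbar + s⁻¹ • u) - f xbar) + ∑ j, (s⁻¹ * t j) • v j, ?_, ?_⟩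
        · rw [hA, Set.mem_add]
          refine ⟨f (xbar + s⁻¹ • u) - f xbar, ⟨xbar + s⁻¹ • u, ?_, rfl⟩,
            ∑ j, (s⁻¹ * t j) • v j, ?_, rfl⟩
          · rw [hmemX]
            intro i
            have h1 : ∑ j, a i j * (xbar + s⁻¹ • u) j
                = (∑ j, a i j * xbar j) + s⁻¹ * ∑ j, a i j * u j := by
              rw [Finset.mul_sum, ← Finset.sum_add_distrib]
              refine Finset.sum_congr rfl fun j _ => ?_
              simp only [Pi.add_apply, Pi.smul_apply, smul_eq_mul]; ring
            have h2 := mul_le_mul_of_nonneg_left (hu i) (inv_nonneg.mpr hs0.le)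
            have h3 : s⁻¹ * (s * b' i) = b' i := by
              rw [← mul_assoc, inv_mul_cancel₀ hs0.ne', one_mul]
            rw [h3, hb'i] at h2
            rw [h1]
            linarith
          · rw [hK]
            exact ⟨fun j => s⁻¹ * t j, fun j => mul_nonneg (inv_nonneg.mpr hs0.le) (ht j), rfl⟩
        · rw [hfy (xbar + s⁻¹ • u)]
          have h4 : (xbar + s⁻¹ • u) - xbar = s⁻¹ • u := by abel
          rw [h4, map_smul, smul_add, smul_smul, mul_inv_cancel₀ hs0.ne', one_smul,
            Finset.smul_sum]
          congr 1
          refine Finset.sum_congr rfl fun j _ => ?_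
          rw [smul_smul, ← mul_assoc, mul_inv_cancel₀ hs0.ne', one_mul]
  -- H-polyhedrality of coneGen A
  have hHP : IsHPoly (coneGen A) := by
    rw [hcone]
    set Lc : Fin n → Fin m → ℝ := fun j => f.linear (fun j' => if j = j' then 1 else 0) with hLc
    have hLin : ∀ (u : Fin n → ℝ) (k : Fin m), f.linear u k = ∑ j, u j * Lc j k := by
      intro u k
      have h1 := congrFun (LinearMap.pi_apply_eq_sum_univ f.linear u) k
      simpa [Finset.sum_apply, hLc] using h1
    set κ : Type := (Fin n) ⊕ (Unit ⊕ Fin q) with hκ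
    set ι : Type := (Fin p) ⊕ (Unit ⊕ (Fin q ⊕ (Fin m ⊕ Fin m))) with hι
    set AA : ι → Fin m → ℝ := Sum.elim (fun _ => 0) (Sum.elim (fun _ => 0)
      (Sum.elim (fun _ => 0) (Sum.elim (fun k kk => if k = kk then 1 else 0)
        (fun k kk => if k = kk then -1 else 0)))) with hAA
    set BB : ι → κ → ℝ := Sum.elim
      (fun i => Sum.elim (fun j => a i j) (Sum.elim (fun _ => -(b' i)) (fun _ => 0)))
      (Sum.elim
        (fun _ => Sum.elim (fun _ => 0) (Sum.elim (fun _ => -1) (fun _ => 0)))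
        (Sum.elim
          (fun jq => Sum.elim (fun _ => 0) (Sum.elim (fun _ => 0)
            (fun j => if jq = j then -1 else 0)))
          (Sum.elim
            (fun k => Sum.elim (fun j => -(Lc j k)) (Sum.elim (fun _ => 0)
              (fun j => -(v j k))))
            (fun k => Sum.elim (fun j => Lc j k) (Sum.elim (fun _ => 0)
              (fun j => v j k)))))) with hBB
    set bb : ι → ℝ := fun _ => 0 with hbb
    have hBsum : ∀ (g : κ → ℝ), ∑ j : κ, g j
        = (∑ j : Fin n, g (Sum.inl j)) + (g (Sum.inr (Sum.inl ()))
          + ∑ j : Fin q, g (Sum.inr (Sum.inr j))) := by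
      intro g
      rw [Fintype.sum_sum_type, Fintype.sum_sum_type]
      simp
    have heq : {z : Fin m → ℝ | ∃ (u : Fin n → ℝ) (s : ℝ) (t : Fin q → ℝ),
        (∀ i, ∑ j, a i j * u j ≤ s * b' i) ∧ 0 ≤ s ∧ (∀ j, 0 ≤ t j) ∧
        z = f.linear u + ∑ j, t j • v j}
        = {z : Fin m → ℝ | ∃ x : κ → ℝ,
            ∀ i, (∑ k, AA i k * z k) + (∑ j, BB i j * x j) ≤ bb i} := by
      ext z
      simp only [mem_setOf_eq]
      have hLsum : ∀ (x : κ → ℝ) (k : Fin m), ∑ j : Fin n, Lc j k * x (Sum.inl j)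
          = f.linear (fun j => x (Sum.inl j)) k := by
        intro x k
        rw [hLin (fun j => x (Sum.inl j)) k]
        exact Finset.sum_congr rfl fun _ _ => mul_comm _ _
      have hVsum : ∀ (x : κ → ℝ) (k : Fin m), ∑ j : Fin q, v j k * x (Sum.inr (Sum.inr j))
          = ∑ j : Fin q, x (Sum.inr (Sum.inr j)) * v j k :=
        fun x k => Finset.sum_congr rfl fun _ _ => mul_comm _ _
      have r1 : ∀ (x : κ → ℝ) (i : Fin p),
          ((∑ k, AA (Sum.inl i) k * z k) + (∑ j, BB (Sum.inl i) j * x j) ≤ bb (Sum.inl i))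
          ↔ ∑ j, a i j * x (Sum.inl j) ≤ x (Sum.inr (Sum.inl ())) * b' i := by
        intro x i
        rw [hBsum (fun j => BB (Sum.inl i) j * x j)]
        simp only [hAA, hBB, hbb, Sum.elim_inl, Sum.elim_inr, Pi.zero_apply, zero_mul,
          Finset.sum_const_zero, zero_add, add_zero, neg_mul, mul_zero]
        constructor <;> intro <;> nlinarith []
      have r2 : ∀ (x : κ → ℝ),
          ((∑ k, AA (Sum.inr (Sum.inl ())) k * z k)
            + (∑ j, BB (Sum.inr (Sum.inl ())) j * x j) ≤ bb (Sum.inr (Sum.inl ())))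
          ↔ 0 ≤ x (Sum.inr (Sum.inl ())) := by
        intro x
        rw [hBsum (fun j => BB (Sum.inr (Sum.inl ())) j * x j)]
        simp only [hAA, hBB, hbb, Sum.elim_inl, Sum.elim_inr, Pi.zero_apply, zero_mul,
          Finset.sum_const_zero, zero_add, add_zero, neg_mul, one_mul, mul_zero]
        constructor <;> intro <;> linarith
      have r3 : ∀ (x : κ → ℝ) (jq : Fin q),
          ((∑ k, AA (Sum.inr (Sum.inr (Sum.inl jq))) k * z k)
            + (∑ j, BB (Sum.inr (Sum.inr (Sum.inl jq))) j * x j)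
            ≤ bb (Sum.inr (Sum.inr (Sum.inl jq))))
          ↔ 0 ≤ x (Sum.inr (Sum.inr jq)) := by
        intro x jq
        rw [hBsum (fun j => BB (Sum.inr (Sum.inr (Sum.inl jq))) j * x j)]
        simp only [hAA, hBB, hbb, Sum.elim_inl, Sum.elim_inr, Pi.zero_apply, zero_mul,
          Finset.sum_const_zero, zero_add, add_zero, neg_mul, one_mul, mul_zero,
          ite_mul, Finset.sum_ite_eq, Finset.mem_univ, if_true]
        constructor <;> intro <;> linarith
      have r4 : ∀ (x : κ → ℝ) (k : Fin m),
          ((∑ kk, AA (Sum.inr (Sum.inr (Sum.inr (Sum.inl k)))) kk * z kk)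
            + (∑ j, BB (Sum.inr (Sum.inr (Sum.inr (Sum.inl k)))) j * x j)
            ≤ bb (Sum.inr (Sum.inr (Sum.inr (Sum.inl k)))))
          ↔ z k ≤ f.linear (fun j => x (Sum.inl j)) k
              + ∑ j, x (Sum.inr (Sum.inr j)) * v j k := by
        intro x k
        rw [hBsum (fun j => BB (Sum.inr (Sum.inr (Sum.inr (Sum.inl k)))) j * x j)]
        simp only [hAA, hBB, hbb, Sum.elim_inl, Sum.elim_inr, Pi.zero_apply, zero_mul,
          Finset.sum_const_zero, zero_add, add_zero, neg_mul, one_mul, mul_zero,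
          ite_mul, Finset.sum_ite_eq, Finset.mem_univ, if_true,
          Finset.sum_neg_distrib]
        rw [hLsum x k, hVsum x k]
        constructor <;> intro <;> linarith
      have r5 : ∀ (x : κ → ℝ) (k : Fin m),
          ((∑ kk, AA (Sum.inr (Sum.inr (Sum.inr (Sum.inr k)))) kk * z kk)
            + (∑ j, BB (Sum.inr (Sum.inr (Sum.inr (Sum.inr k)))) j * x j)
            ≤ bb (Sum.inr (Sum.inr (Sum.inr (Sum.inr k)))))
          ↔ f.linear (fun j => x (Sum.inl j)) k
              + ∑ j, x (Sum.inr (Sum.inr j)) * v j k ≤ z k := by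
        intro x k
        rw [hBsum (fun j => BB (Sum.inr (Sum.inr (Sum.inr (Sum.inr k)))) j * x j)]
        simp only [hAA, hBB, hbb, Sum.elim_inl, Sum.elim_inr, Pi.zero_apply, zero_mul,
          Finset.sum_const_zero, zero_add, add_zero, neg_mul, one_mul, mul_zero,
          ite_mul, Finset.sum_ite_eq, Finset.mem_univ, if_true,
          Finset.sum_neg_distrib]
        rw [hLsum x k, hVsum x k]
        constructor <;> intro <;> linarith
      constructor
      · rintro ⟨u, s, t, hu, hs, ht, hz⟩
        refine ⟨Sum.elim u (Sum.elim (fun _ => s) t), ?_⟩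
        rintro (i | (⟨⟩ | (jq | (k | k))))
        · exact (r1 _ i).mpr (hu i)
        · exact (r2 _).mpr hs
        · exact (r3 _ jq).mpr (ht jq)
        · refine (r4 _ k).mpr ?_
          rw [hz]
          simp [Finset.sum_apply]
        · refine (r5 _ k).mpr ?_
          rw [hz]
          simp [Finset.sum_apply]
      · rintro ⟨x, hx⟩
        refine ⟨fun j => x (Sum.inl j), x (Sum.inr (Sum.inl ())),
          fun j => x (Sum.inr (Sum.inr j)), ?_, ?_, ?_, ?_⟩
        · intro i
          have := (r1 x i).mp (hx _)
          linarith [this]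
        · exact (r2 x).mp (hx _)
        · exact fun jq => (r3 x jq).mp (hx _)
        · funext k
          have h4 := (r4 x k).mp (hx _)
          have h5 := (r5 x k).mp (hx _)
          have : z k = f.linear (fun j => x (Sum.inl j)) k
              + ∑ j, x (Sum.inr (Sum.inr j)) * v j k := le_antisymm h4 h5
          rw [this]
          simp [Finset.sum_apply]
    rw [heq]
    exact key' m κ ι AA BB bb
  have hclosed : IsClosed (coneGen A) := isHPoly_closed hHP
  constructor
  · intro hB
    rintro ⟨y, hy, hKy, hne⟩
    have hz : f y - f xbar ∈ coneGen A := by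
      refine ⟨1, zero_le_one, f y - f xbar, ?_, (one_smul _ _).symm⟩
      rw [hA, Set.mem_add]
      exact ⟨f y - f xbar, ⟨y, hy, rfl⟩, 0, hK0, by simp⟩
    have hmem : f y - f xbar ∈ closure (coneGen A) ∩ (-K) :=
      ⟨subset_closure hz, by rw [Set.mem_neg, neg_sub]; exact hKy⟩
    rw [hB] at hmem
    exact hne (sub_eq_zero.mp (by simpa using hmem))
  · intro heff
    rw [hclosed.closure_eq]
    apply Set.eq_singleton_iff_unique_mem.mpr
    constructor
    · exact ⟨⟨0, le_refl 0, 0, h0A, by simp⟩, by rw [Set.mem_neg, neg_zero]; exact hK0⟩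
    · rintro z ⟨hz1, hz2⟩
      obtain ⟨s, hs, d, hd, hzd⟩ := hz1
      rcases eq_or_lt_of_le hs with h0 | h0
      · rw [hzd, ← h0, zero_smul]
      · have hnegz : -z ∈ K := by rwa [Set.mem_neg] at hz2
        rw [hA, Set.mem_add] at hd
        obtain ⟨w, hw, k, hk, hwk⟩ := hd
        obtain ⟨y, hy, hyw⟩ := hw
        have hyw' : f y - f xbar = w := hyw
        have hinv : s⁻¹ • (-z) = -((f y - f xbar) + k) := by
          rw [hzd, ← hwk, ← hyw', ← smul_neg, smul_smul, inv_mul_cancel₀ h0.ne', one_smul]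
        have hid : f xbar - f y = s⁻¹ • (-z) + k := by
          rw [hinv]; abel
        have hKxy : f xbar - f y ∈ K := by
          rw [hid]
          exact hKadd _ _ (hKsmul _ _ (inv_nonneg.mpr h0.le) hnegz) hk
        by_cases hne : f y = f xbar
        · have hw0 : f y - f xbar = 0 := sub_eq_zero.mpr hne
          have hzK : z ∈ K := by
            rw [hzd, ← hwk, ← hyw', hw0, zero_add]
            exact hKsmul s k h0.le hk
          have : z ∈ K ∩ (-K) := ⟨hzK, hz2⟩
          rw [hKpointed] at this
          simpa using this
        · exact absurd ⟨y, hy, hKxy, hne⟩ heff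
end

section
/- Let X ⊆ ℝ^n be a nonempty polyhedral convex set, f : ℝ^n → ℝ^m an affine map, K ⊆ ℝ^m a pointed polyhedral convex cone (K ∩ (−K) = {0}), and e ∈ K \ {0}. If there exists at least one e-properly efficient solution, then the set of e-properly efficient solutions coincides with the set of e-efficient solutions; that is, either the e-properly efficient solution set is empty or it equals the e-efficient solution set. -/
open Set Pointwise

namespace Stmt9Aux

def IsPoly {d : ℕ} (S : Set (Fin d → ℝ)) : Prop :=
  ∃ (p : ℕ) (a : Fin p → Fin d → ℝ) (b : Fin p → ℝ), S = {x | ∀ i, ∑ j, a i j * x j ≤ b i}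

lemma isPoly_of_fintype {d : ℕ} {ι : Type} [Fintype ι] (a : ι → Fin d → ℝ) (b : ι → ℝ) :
    IsPoly {x : Fin d → ℝ | ∀ i, ∑ j, a i j * x j ≤ b i} := by
  classical
  obtain ⟨eqv⟩ : Nonempty (ι ≃ Fin (Fintype.card ι)) := ⟨Fintype.equivFin ι⟩
  refine ⟨Fintype.card ι, fun i => a (eqv.symm i), fun i => b (eqv.symm i), ?_⟩
  ext x
  constructor
  · intro h i; exact h (eqv.symm i)
  · intro h i; simpa using h (eqv i)


lemma IsPoly.isClosed {d : ℕ} {S : Set (Fin d → ℝ)} (hS : IsPoly S) : IsClosed S := by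
  obtain ⟨p, a, b, rfl⟩ := hS
  have h : {x : Fin d → ℝ | ∀ i, ∑ j, a i j * x j ≤ b i} =
      ⋂ i, {x : Fin d → ℝ | ∑ j, a i j * x j ≤ b i} := by
    ext x; simp [Set.mem_iInter]
  rw [h]
  refine isClosed_iInter fun i => isClosed_le ?_ continuous_const
  exact continuous_finset_sum _ fun j _ => continuous_const.mul (continuous_apply j)

lemma isPoly_proj {d : ℕ} {S : Set (Fin (d+1) → ℝ)} (hS : IsPoly S) :
    IsPoly {y : Fin d → ℝ | ∃ s : ℝ, Fin.snoc y s ∈ S} := by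
  classical
  obtain ⟨p, a, b, rfl⟩ := hS
  set α : Fin p → ℝ := fun i => a i (Fin.last d) with hα
  set c : Fin p → (Fin d → ℝ) → ℝ := fun i y => ∑ j, a i (Fin.castSucc j) * y j with hc
  have hsum : ∀ (i) (y : Fin d → ℝ) (s : ℝ),
      (∑ j, a i j * (Fin.snoc y s : Fin (d+1) → ℝ) j) = c i y + α i * s := by
    intro i y s
    rw [Fin.sum_univ_castSucc]
    simp [hc, hα]
  set ι := ({i : Fin p // α i = 0} ⊕ ({i : Fin p // 0 < α i} × {i : Fin p // α i < 0}))
    with hι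
  set A' : ι → Fin d → ℝ := Sum.elim
      (fun i0 => fun k => a i0.1 (Fin.castSucc k))
      (fun ij => fun k => α ij.1.1 * a ij.2.1 (Fin.castSucc k)
          - α ij.2.1 * a ij.1.1 (Fin.castSucc k)) with hA'
  set B' : ι → ℝ := Sum.elim (fun i0 => b i0.1)
      (fun ij => α ij.1.1 * b ij.2.1 - α ij.2.1 * b ij.1.1) with hB'
  have hrow : ∀ (i j : Fin p) (y : Fin d → ℝ),
      (∑ k, (α i * a j (Fin.castSucc k) - α j * a i (Fin.castSucc k)) * y k)
        = α i * c j y - α j * c i y := by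
    intro i j y
    have h1 : ∀ k : Fin d, (α i * a j (Fin.castSucc k) - α j * a i (Fin.castSucc k)) * y k
        = α i * (a j (Fin.castSucc k) * y k) - α j * (a i (Fin.castSucc k) * y k) := by
      intro k; ring
    simp only [h1, hc, Finset.sum_sub_distrib, Finset.mul_sum]
  have key : {y : Fin d → ℝ | ∃ s : ℝ, Fin.snoc y s ∈
        {x : Fin (d+1) → ℝ | ∀ i, ∑ j, a i j * x j ≤ b i}} =
      {y : Fin d → ℝ | ∀ i : ι, ∑ k, A' i k * y k ≤ B' i} := by
    ext y
    simp only [mem_setOf_eq]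
    constructor
    · rintro ⟨s, hs⟩ i
      have hs' : ∀ i, c i y + α i * s ≤ b i := fun i => by rw [← hsum]; exact hs i
      rcases i with ⟨i0, hi0⟩ | ⟨⟨i, hi⟩, ⟨j, hj⟩⟩
      · have h2 := hs' i0
        rw [hi0] at h2
        simp only [hA', hB', Sum.elim_inl]
        simpa [hc] using by linarith
      · simp only [hA', hB', Sum.elim_inr]
        rw [hrow]
        have hip := hs' i
        have hjp := hs' j
        nlinarith [hip, hjp, hi, hj]
    · intro h
      set q : Fin p → ℝ := fun i => (b i - c i y) / α i with hq
      have hzero : ∀ i, α i = 0 → c i y ≤ b i := by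
        intro i hi
        have h2 := h (Sum.inl ⟨i, hi⟩)
        simp only [hA', hB', Sum.elim_inl] at h2
        simpa [hc] using h2
      have hcross : ∀ i j, 0 < α i → α j < 0 → q j ≤ q i := by
        intro i j hi hj
        have h2 := h (Sum.inr ⟨⟨i, hi⟩, ⟨j, hj⟩⟩)
        simp only [hA', hB', Sum.elim_inr] at h2
        rw [hrow] at h2
        have e1 : α j * q j = b j - c j y := by
          simp only [hq]; rw [mul_comm]; exact div_mul_cancel₀ _ (ne_of_lt hj)
        have e2 : α i * q i = b i - c i y := by
          simp only [hq]; rw [mul_comm]; exact div_mul_cancel₀ _ (ne_of_gt hi)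
        nlinarith [h2, e1, e2, mul_pos hi (neg_pos.mpr hj)]
      set Ls : Finset (Fin p) := Finset.univ.filter (fun i => α i < 0) with hLs
      set Us : Finset (Fin p) := Finset.univ.filter (fun i => 0 < α i) with hUs
      -- choose s
      refine ⟨if hL : Ls.Nonempty then Ls.sup' hL q
        else if hU : Us.Nonempty then Us.inf' hU q else 0, ?_⟩
      intro i
      rw [hsum]
      rcases lt_trichotomy (α i) 0 with hneg | hzer | hpos
      · -- lower bound constraint: α i * s ≤ b i - c i y  since s ≥ q i
        have hiL : i ∈ Ls := by simp [hLs, hneg]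
        have hLne : Ls.Nonempty := ⟨i, hiL⟩
        rw [dif_pos hLne]
        have hsge : q i ≤ Ls.sup' hLne q := Finset.le_sup' q hiL
        have e1 : α i * q i = b i - c i y := by
          simp only [hq]; rw [mul_comm]; exact div_mul_cancel₀ _ (ne_of_lt hneg)
        nlinarith [hsge, e1, hneg]
      · rw [hzer]; simpa using hzero i hzer
      · -- upper bound: s ≤ q i
        have hiU : i ∈ Us := by simp [hUs, hpos]
        have hUne : Us.Nonempty := ⟨i, hiU⟩
        have e1 : α i * q i = b i - c i y := by
          simp only [hq]; rw [mul_comm]; exact div_mul_cancel₀ _ (ne_of_gt hpos)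
        by_cases hL : Ls.Nonempty
        · rw [dif_pos hL]
          have hsle : Ls.sup' hL q ≤ q i := by
            refine Finset.sup'_le hL q fun j hjL => ?_
            have hjneg : α j < 0 := by simpa [hLs] using hjL
            exact hcross i j hpos hjneg
          nlinarith [hsle, e1, hpos]
        · rw [dif_neg hL, dif_pos hUne]
          have hsle : Us.inf' hUne q ≤ q i := Finset.inf'_le q hiU
          nlinarith [hsle, e1, hpos]
  rw [key]
  exact isPoly_of_fintype _ _

end Stmt9Aux

namespace Stmt9Aux2
open Stmt9Aux

lemma isPoly_multiproj {μ : ℕ} : ∀ (d : ℕ) (S : Set (Fin (μ + d) → ℝ)), IsPoly S →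
    IsPoly {w : Fin μ → ℝ | ∃ u : Fin d → ℝ, Fin.append w u ∈ S}
  | 0, S, hS => by
      have h : {w : Fin μ → ℝ | ∃ u : Fin 0 → ℝ, Fin.append w u ∈ S} = S := by
        ext w
        constructor
        · rintro ⟨u, hu⟩
          rwa [Subsingleton.elim u Fin.elim0, Fin.append_elim0] at hu
        · intro hw
          exact ⟨Fin.elim0, by rwa [Fin.append_elim0]⟩
      rw [h]; exact hS
  | (d+1), S, hS => by
      have hS' : IsPoly {y : Fin (μ + d) → ℝ | ∃ s : ℝ, Fin.snoc y s ∈ S} := isPoly_proj hS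
      have key : {w : Fin μ → ℝ | ∃ u : Fin (d+1) → ℝ, Fin.append w u ∈ S} =
          {w : Fin μ → ℝ | ∃ u : Fin d → ℝ, Fin.append w u ∈
            {y : Fin (μ + d) → ℝ | ∃ s : ℝ, Fin.snoc y s ∈ S}} := by
        ext w
        simp only [mem_setOf_eq]
        constructor
        · rintro ⟨u, hu⟩
          refine ⟨Fin.init u, u (Fin.last d), ?_⟩
          rwa [← Fin.append_snoc, Fin.snoc_init_self]
        · rintro ⟨u', s, hu⟩
          exact ⟨Fin.snoc u' s, by rwa [Fin.append_snoc]⟩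
      rw [key]
      exact isPoly_multiproj d _ hS'

lemma isPoly_image {d μ : ℕ} {S : Set (Fin d → ℝ)} (hS : IsPoly S)
    (g : (Fin d → ℝ) → (Fin μ → ℝ)) (M : Fin μ → Fin d → ℝ) (c0 : Fin μ → ℝ)
    (hg : ∀ z k, g z k = (∑ j, M k j * z j) + c0 k) : IsPoly (g '' S) := by
  classical
  obtain ⟨p, a, b, hSeq⟩ := hS
  set G : Set (Fin (μ + d) → ℝ) :=
    {z | (fun j => z (Fin.natAdd μ j)) ∈ S ∧
         (fun k => z (Fin.castAdd d k)) = g (fun j => z (Fin.natAdd μ j))} with hG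
  have hGpoly : IsPoly G := by
    set R : (Fin p ⊕ (Fin μ ⊕ Fin μ)) → Fin (μ + d) → ℝ := Sum.elim
        (fun i => Fin.append (0 : Fin μ → ℝ) (a i))
        (Sum.elim (fun k => Fin.append (Pi.single k 1) (fun j => - M k j))
                  (fun k => Fin.append (- Pi.single k (1:ℝ)) (fun j => M k j))) with hR
    set β : (Fin p ⊕ (Fin μ ⊕ Fin μ)) → ℝ := Sum.elim b (Sum.elim c0 (fun k => - c0 k)) with hβ
    have hGeq : G = {z | ∀ i, ∑ jj, R i jj * z jj ≤ β i} := by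
      ext z
      set x : Fin d → ℝ := fun j => z (Fin.natAdd μ j) with hx
      set w : Fin μ → ℝ := fun k => z (Fin.castAdd d k) with hw
      have hsplit : ∀ (r1 : Fin μ → ℝ) (r2 : Fin d → ℝ),
          (∑ jj, Fin.append r1 r2 jj * z jj) = (∑ k, r1 k * w k) + (∑ j, r2 j * x j) := by
        intro r1 r2
        rw [Fin.sum_univ_add]
        simp [Fin.append_left, Fin.append_right, hx, hw]
      have hsingle : ∀ (k : Fin μ), (∑ k', (Pi.single k (1:ℝ) : Fin μ → ℝ) k' * w k') = w k := by
        intro k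
        rw [Finset.sum_eq_single k]
        · simp
        · intro k' _ hk'; simp [Pi.single_apply, hk']
        · intro hk; simp at hk
      constructor
      · rintro ⟨hxS, hwg⟩ i
        rcases i with i | k | k
        · simp only [hR, hβ, Sum.elim_inl]
          rw [hsplit]
          simp only [Pi.zero_apply, zero_mul, Finset.sum_const_zero, zero_add]
          rw [hSeq] at hxS
          exact hxS i
        · simp only [hR, hβ, Sum.elim_inr, Sum.elim_inl]
          rw [hsplit, hsingle]
          have hwk : w k = (∑ j, M k j * x j) + c0 k := by
            simpa [hg] using congrFun hwg k
          have hneg : (∑ j, - M k j * x j) = - ∑ j, M k j * x j := by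
            simp [neg_mul, Finset.sum_neg_distrib]
          rw [hneg]; linarith
        · simp only [hR, hβ, Sum.elim_inr]
          have hnegs : (∑ k', (- Pi.single k (1:ℝ) : Fin μ → ℝ) k' * w k') = - w k := by
            have : ∀ k', (- Pi.single k (1:ℝ) : Fin μ → ℝ) k' * w k'
                = - ((Pi.single k (1:ℝ) : Fin μ → ℝ) k' * w k') := by intro k'; simp
            rw [Finset.sum_congr rfl fun k' _ => this k', Finset.sum_neg_distrib, hsingle]
          rw [hsplit, hnegs]
          have hwk : w k = (∑ j, M k j * x j) + c0 k := by
            simpa [hg] using congrFun hwg k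
          linarith
      · intro h
        constructor
        · rw [hSeq]
          intro i
          have h2 := h (Sum.inl i)
          simp only [hR, hβ, Sum.elim_inl] at h2
          rw [hsplit] at h2
          simpa using h2
        · funext k
          show w k = g x k
          rw [hg]
          have h2 := h (Sum.inr (Sum.inl k))
          have h3 := h (Sum.inr (Sum.inr k))
          simp only [hR, hβ, Sum.elim_inr, Sum.elim_inl] at h2 h3
          rw [hsplit, hsingle] at h2
          rw [hsplit] at h3
          have hnegs : (∑ k', (- Pi.single k (1:ℝ) : Fin μ → ℝ) k' * w k') = - w k := by
            have : ∀ k', (- Pi.single k (1:ℝ) : Fin μ → ℝ) k' * w k'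
                = - ((Pi.single k (1:ℝ) : Fin μ → ℝ) k' * w k') := by intro k'; simp
            rw [Finset.sum_congr rfl fun k' _ => this k', Finset.sum_neg_distrib, hsingle]
          rw [hnegs] at h3
          have hneg : (∑ j, - M k j * x j) = - ∑ j, M k j * x j := by
            simp [neg_mul, Finset.sum_neg_distrib]
          rw [hneg] at h2
          linarith
    rw [hGeq]
    exact isPoly_of_fintype _ _
  have himg : g '' S = {w : Fin μ → ℝ | ∃ u : Fin d → ℝ, Fin.append w u ∈ G} := by
    ext w
    simp only [mem_setOf_eq, hG, mem_image]
    constructor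
    · rintro ⟨x, hxS, hgx⟩
      refine ⟨x, ?_, ?_⟩
      · have : (fun j => Fin.append w x (Fin.natAdd μ j)) = x :=
          funext fun j => Fin.append_right w x j
        rwa [this]
      · have h1 : (fun j => Fin.append w x (Fin.natAdd μ j)) = x :=
          funext fun j => Fin.append_right w x j
        have h2 : (fun k => Fin.append w x (Fin.castAdd d k)) = w :=
          funext fun k => Fin.append_left w x k
        rw [h1, h2, hgx]
    · rintro ⟨u, huS, hwg⟩
      have h1 : (fun j => Fin.append w u (Fin.natAdd μ j)) = u :=
        funext fun j => Fin.append_right w u j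
      have h2 : (fun k => Fin.append w u (Fin.castAdd d k)) = w :=
        funext fun k => Fin.append_left w u k
      rw [h1] at huS
      rw [h2, h1] at hwg
      exact ⟨u, huS, hwg.symm⟩
  rw [himg]
  exact isPoly_multiproj d G hGpoly

end Stmt9Aux2

section Main
open Stmt9Aux Stmt9Aux2

variable {n m : ℕ}

lemma affine_rep (f : (Fin n → ℝ) →ᵃ[ℝ] (Fin m → ℝ)) :
    ∃ M : Fin m → Fin n → ℝ, ∀ x k, f x k = (∑ j, M k j * x j) + f 0 k := by
  classical
  refine ⟨fun k j => f.linear (fun j' => if j = j' then 1 else 0) k, fun x k => ?_⟩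
  have h1 : f x = f.linear x + f 0 := by
    have h := f.map_vadd (0 : Fin n → ℝ) x
    simpa using h
  have h2 : f.linear x = ∑ j, x j • f.linear (fun j' => if j = j' then (1:ℝ) else 0) := by
    conv_lhs => rw [pi_eq_sum_univ x]
    rw [map_sum]
    exact Finset.sum_congr rfl fun j _ => by rw [map_smul]
  rw [h1]
  show f.linear x k + f 0 k = _
  rw [h2, Finset.sum_apply]
  congr 1
  exact Finset.sum_congr rfl fun j _ => by simp [mul_comm]

lemma sum_single_neg {q' : ℕ} (j : Fin q') (zf : Fin q' → ℝ) :
    (∑ j', (if j = j' then (-1:ℝ) else 0) * zf j') = - zf j := by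
  rw [Finset.sum_eq_single j]
  · simp
  · intro j' _ hj'; simp [Ne.symm hj']
  · intro h; simp at h

lemma isPoly_image_add_cone {q : ℕ} (f : (Fin n → ℝ) →ᵃ[ℝ] (Fin m → ℝ))
    (X : Set (Fin n → ℝ)) (hX : IsPoly X) (v : Fin q → Fin m → ℝ) :
    IsPoly ((⇑f '' X) +
      {x : Fin m → ℝ | ∃ t : Fin q → ℝ, (∀ j, 0 ≤ t j) ∧ x = ∑ j, t j • v j}) := by
  classical
  obtain ⟨M, hM⟩ := affine_rep f
  obtain ⟨p, a, b, hXeq⟩ := hX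
  set P : Set (Fin (n + q) → ℝ) :=
    {z | ∀ i : (Fin p ⊕ Fin q), (∑ jj, (Sum.elim (fun i => Fin.append (a i) 0)
        (fun j => Fin.append (0 : Fin n → ℝ)
          (fun j' => if j = j' then (-1:ℝ) else 0)) i) jj * z jj)
        ≤ Sum.elim b (fun _ => 0) i} with hP
  have hPpoly : IsPoly P := isPoly_of_fintype _ _
  set g : (Fin (n + q) → ℝ) → (Fin m → ℝ) :=
    fun z => f (fun j => z (Fin.castAdd q j)) + ∑ j, z (Fin.natAdd n j) • v j with hg
  have hgrep : ∀ z k, g z k = (∑ jj, (Fin.append (M k) (fun j => v j k)) jj * z jj) + f 0 k := by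
    intro z k
    rw [Fin.sum_univ_add]
    simp only [Fin.append_left, Fin.append_right]
    show f (fun j => z (Fin.castAdd q j)) k + (∑ j, z (Fin.natAdd n j) • v j) k = _
    rw [hM, Finset.sum_apply]
    have h3 : ∀ j, (z (Fin.natAdd n j) • v j) k = v j k * z (Fin.natAdd n j) := fun j => by
      simp [mul_comm]
    rw [Finset.sum_congr rfl fun j _ => h3 j]
    ring
  have himg : g '' P = (⇑f '' X) +
      {x : Fin m → ℝ | ∃ t : Fin q → ℝ, (∀ j, 0 ≤ t j) ∧ x = ∑ j, t j • v j} := by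
    ext w
    constructor
    · rintro ⟨z, hzP, rfl⟩
      have hfront : (fun j => z (Fin.castAdd q j)) ∈ X := by
        rw [hXeq]
        intro i
        have h2 := hzP (Sum.inl i)
        simp only [Sum.elim_inl] at h2
        rw [Fin.sum_univ_add] at h2
        simpa [Fin.append_left, Fin.append_right] using h2
      have hback : ∀ j, 0 ≤ z (Fin.natAdd n j) := by
        intro j
        have h2 := hzP (Sum.inr j)
        simp only [Sum.elim_inr] at h2
        rw [Fin.sum_univ_add] at h2
        simp only [Fin.append_left, Fin.append_right, Pi.zero_apply, zero_mul,
          Finset.sum_const_zero, zero_add] at h2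
        rw [sum_single_neg] at h2
        linarith
      exact Set.add_mem_add (Set.mem_image_of_mem f hfront)
        ⟨fun j => z (Fin.natAdd n j), hback, rfl⟩
    · intro hw
      rw [Set.mem_add] at hw
      obtain ⟨w1, hw1, w2, hw2, rfl⟩ := hw
      obtain ⟨x, hxX, rfl⟩ := hw1
      obtain ⟨t, ht0, rfl⟩ := hw2
      refine ⟨Fin.append x t, ?_, ?_⟩
      · intro i
        rcases i with i | j
        · simp only [Sum.elim_inl]
          rw [Fin.sum_univ_add]
          simp only [Fin.append_left, Fin.append_right, Pi.zero_apply, zero_mul,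
            Finset.sum_const_zero, add_zero]
          rw [hXeq] at hxX
          exact hxX i
        · simp only [Sum.elim_inr]
          rw [Fin.sum_univ_add]
          simp only [Fin.append_left, Fin.append_right, Pi.zero_apply, zero_mul,
            Finset.sum_const_zero, zero_add]
          rw [sum_single_neg]
          simpa using ht0 j
      · have h1 : (fun j => Fin.append x t (Fin.castAdd q j)) = x :=
          funext fun j => Fin.append_left x t j
        have h2 : ∀ j, Fin.append x t (Fin.natAdd n j) = t j :=
          fun j => Fin.append_right x t j
        show (f fun j => Fin.append x t (Fin.castAdd q j))
            + (∑ j, Fin.append x t (Fin.natAdd n j) • v j) = f x + ∑ j, t j • v j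
        rw [h1]
        congr 1
        exact Finset.sum_congr rfl fun j _ => by rw [h2]
  rw [← himg]
  exact isPoly_image hPpoly g (fun k => Fin.append (M k) (fun j => v j k)) (fun k => f 0 k) hgrep

end Main

/-- In a linear vector optimization problem (polyhedral convex `X`, affine `f`, pointed
polyhedral convex cone `K`) with `e ∈ K \ {0}`: if there exists at least one `e`-properly
efficient solution, then the `e`-properly efficient solution set coincides with the
`e`-efficient solution set. -/
theorem stmt_9 {n m : ℕ} (X : Set (Fin n → ℝ)) (hXne : X.Nonempty)
    (hXpoly : ∃ (p : ℕ) (a : Fin p → Fin n → ℝ) (b : Fin p → ℝ),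
      X = {x | ∀ i, ∑ j, a i j * x j ≤ b i})
    (f : (Fin n → ℝ) →ᵃ[ℝ] (Fin m → ℝ))
    (K : Set (Fin m → ℝ))
    (hKpoly : ∃ (q : ℕ) (v : Fin q → Fin m → ℝ),
      K = {x | ∃ t : Fin q → ℝ, (∀ j, 0 ≤ t j) ∧ x = ∑ j, t j • v j})
    (hKpointed : K ∩ (-K) = {0})
    (e : Fin m → ℝ) (heK : e ∈ K) (he0 : e ≠ 0)
    (hex : ∃ xbar ∈ X,
      closure (coneGen (((fun x => f x - (f xbar - e)) '' X) + K)) ∩ (-K) = {0}) :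
    {x | x ∈ X ∧
        closure (coneGen (((fun y => f y - (f x - e)) '' X) + K)) ∩ (-K) = {0}} =
      {x | x ∈ X ∧ ¬ ∃ y ∈ X, f x - e - f y ∈ K ∧ f y ≠ f x - e} := by
  classical
  obtain ⟨q, v, hKeq⟩ := hKpoly
  have hK0 : (0 : Fin m → ℝ) ∈ K := by
    rw [hKeq]; exact ⟨0, fun j => le_refl 0, by simp⟩
  have hKadd : ∀ {u w : Fin m → ℝ}, u ∈ K → w ∈ K → u + w ∈ K := by
    intro u w hu hw
    rw [hKeq] at hu hw ⊢
    obtain ⟨t1, ht1, rfl⟩ := hu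
    obtain ⟨t2, ht2, rfl⟩ := hw
    refine ⟨t1 + t2, fun j => add_nonneg (ht1 j) (ht2 j), ?_⟩
    rw [← Finset.sum_add_distrib]
    exact Finset.sum_congr rfl fun j _ => (add_smul _ _ _).symm
  have hKsmul : ∀ {r : ℝ} {u : Fin m → ℝ}, 0 ≤ r → u ∈ K → r • u ∈ K := by
    intro r u hr hu
    rw [hKeq] at hu ⊢
    obtain ⟨t1, ht1, rfl⟩ := hu
    refine ⟨fun j => r * t1 j, fun j => mul_nonneg hr (ht1 j), ?_⟩
    rw [Finset.smul_sum]
    exact Finset.sum_congr rfl fun j _ => (smul_smul _ _ _)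
  have hpointed : ∀ {u : Fin m → ℝ}, u ∈ K → -u ∈ K → u = 0 := by
    intro u hu hnu
    have h : u ∈ K ∩ (-K) := ⟨hu, by rwa [Set.mem_neg]⟩
    rw [hKpointed] at h
    exact h
  obtain ⟨pX, aX, bX, hXeq⟩ := hXpoly
  have hXpoly' : Stmt9Aux.IsPoly X := ⟨pX, aX, bX, hXeq⟩
  set A : Set (Fin m → ℝ) := (⇑f '' X) + K with hA
  have hApoly : Stmt9Aux.IsPoly A := by
    rw [hA, hKeq]; exact isPoly_image_add_cone f X hXpoly' v
  have hAclosed : IsClosed A := hApoly.isClosed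
  have hD : ∀ c : Fin m → ℝ,
      ((fun y => f y - c) '' X) + K = {d | d + c ∈ A} := by
    intro c
    ext d
    rw [Set.mem_add]
    constructor
    · rintro ⟨d1, ⟨y, hy, rfl⟩, k, hk, rfl⟩
      show (f y - c + k) + c ∈ A
      have h : (f y - c + k) + c = f y + k := by abel
      rw [h]
      exact Set.add_mem_add (Set.mem_image_of_mem f hy) hk
    · intro hd
      obtain ⟨w1, hw1, k, hk, hsum⟩ := Set.mem_add.mp hd
      obtain ⟨y, hy, rfl⟩ := hw1
      refine ⟨f y - c, ⟨y, hy, rfl⟩, k, hk, ?_⟩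
      calc f y - c + k = (f y + k) - c := by abel
        _ = d := by rw [hsum]; abel
  -- main ext
  ext x
  simp only [Set.mem_setOf_eq]
  constructor
  · rintro ⟨hxX, hcl⟩
    refine ⟨hxX, ?_⟩
    rintro ⟨y, hyX, hK1, hne⟩
    have hmem : f y - (f x - e) ∈ coneGen (((fun y => f y - (f x - e)) '' X) + K) := by
      refine ⟨1, zero_le_one, (f y - (f x - e)) + 0,
        Set.add_mem_add ⟨y, hyX, rfl⟩ hK0, by rw [one_smul, add_zero]⟩
    have hmemK : f y - (f x - e) ∈ -K := by
      rw [Set.mem_neg, neg_sub]; exact hK1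
    have h : f y - (f x - e) ∈
        closure (coneGen (((fun y => f y - (f x - e)) '' X) + K)) ∩ (-K) :=
      ⟨subset_closure hmem, hmemK⟩
    rw [hcl] at h
    exact hne (sub_eq_zero.mp h)
  · rintro ⟨hxX, heff⟩
    refine ⟨hxX, ?_⟩
    push_neg at heff
    set c : Fin m → ℝ := f x - e with hc
    -- efficiency in convenient form, for points of A
    have hDK : ∀ dd : Fin m → ℝ, dd + c ∈ A → dd ∈ -K → dd = 0 := by
      intro dd hdA hdK
      obtain ⟨w1, hw1, k, hk, hsum⟩ := Set.mem_add.mp hdA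
      obtain ⟨y, hy, rfl⟩ := hw1
      have hcfy : c - f y ∈ K := by
        have h : c - f y = k + (-dd) := by linear_combination -hsum
        rw [h]
        exact hKadd hk (Set.mem_neg.mp hdK)
      have hfy : f y = c := heff y hy hcfy
      have hdk : dd = k := by linear_combination hfy - hsum
      exact hpointed (hdk ▸ hk) (Set.mem_neg.mp hdK)
    have hconeK : ∀ w ∈ coneGen (((fun y => f y - c) '' X) + K), w ∈ -K → w = 0 := by
      rintro w ⟨t, ht, d, hd, rfl⟩ hwK
      rcases eq_or_lt_of_le ht with h0 | h0
      · rw [← h0, zero_smul]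
      · have hd' : d ∈ -K := by
          rw [Set.mem_neg]
          have h1 : -(t • d) ∈ K := Set.mem_neg.mp hwK
          have h2 : -d = t⁻¹ • (-(t • d)) := by
            rw [smul_neg, smul_smul, inv_mul_cancel₀ (ne_of_gt h0), one_smul]
          rw [h2]
          exact hKsmul (le_of_lt (inv_pos.mpr h0)) h1
        have hdA : d + c ∈ A := by
          have h := hd; rw [hD c] at h; exact h
        rw [hDK d hdA hd', smul_zero]
    rw [Set.eq_singleton_iff_unique_mem]
    constructor
    · obtain ⟨x₀, hx₀⟩ := hXne
      refine ⟨subset_closure ⟨0, le_refl 0, (f x₀ - c) + 0,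
        Set.add_mem_add ⟨x₀, hx₀, rfl⟩ hK0, (zero_smul ℝ _).symm⟩, ?_⟩
      rw [Set.mem_neg, neg_zero]
      exact hK0
    · rintro z ⟨hzcl, hzK⟩
      by_contra hz0
      by_cases hcA : c ∈ A
      · -- tangent cone argument
        obtain ⟨pA, aA, bA, hAeq⟩ := hApoly
        set T : Set (Fin m → ℝ) :=
          {w | ∀ i, (∑ j, aA i j * c j) = bA i → (∑ j, aA i j * w j) ≤ 0} with hT
        have hTclosed : IsClosed T := by
          have h : T = ⋂ i, {w : Fin m → ℝ |
              (∑ j, aA i j * c j) = bA i → (∑ j, aA i j * w j) ≤ 0} := by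
            ext w; simp [hT, Set.mem_iInter]
          rw [h]
          refine isClosed_iInter fun i => ?_
          by_cases hact : (∑ j, aA i j * c j) = bA i
          · have h2 : {w : Fin m → ℝ | (∑ j, aA i j * c j) = bA i →
                (∑ j, aA i j * w j) ≤ 0} = {w | (∑ j, aA i j * w j) ≤ 0} := by
              ext w; simp [hact]
            rw [h2]
            exact isClosed_le (continuous_finset_sum _ fun j _ =>
              continuous_const.mul (continuous_apply j)) continuous_const
          · have h2 : {w : Fin m → ℝ | (∑ j, aA i j * c j) = bA i →
                (∑ j, aA i j * w j) ≤ 0} = Set.univ := by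
              ext w; simp [hact]
            rw [h2]
            exact isClosed_univ
        have hsub1 : coneGen (((fun y => f y - c) '' X) + K) ⊆ T := by
          rintro w ⟨t, ht, d, hd, rfl⟩ i hact
          have hdA : d + c ∈ A := by
            have h := hd; rw [hD c] at h; exact h
          rw [hAeq] at hdA
          have h2 := hdA i
          have hsplit : (∑ j, aA i j * (d + c) j)
              = (∑ j, aA i j * d j) + (∑ j, aA i j * c j) := by
            rw [← Finset.sum_add_distrib]
            exact Finset.sum_congr rfl fun j _ => by
              show aA i j * (d j + c j) = _; ring
          have hd2 : (∑ j, aA i j * d j) ≤ 0 := by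
            rw [hsplit, hact] at h2; linarith
          have h3 : (∑ j, aA i j * (t • d) j) = t * ∑ j, aA i j * d j := by
            rw [Finset.mul_sum]
            exact Finset.sum_congr rfl fun j _ => by
              show aA i j * (t * d j) = _; ring
          rw [h3]
          exact mul_nonpos_iff.mpr (Or.inl ⟨ht, hd2⟩)
        have hsub2 : T ⊆ coneGen (((fun y => f y - c) '' X) + K) := by
          intro w hw
          set F : Finset (Fin pA) :=
            Finset.univ.filter (fun i => 0 < ∑ j, aA i j * w j) with hF
          have hcAi : ∀ i, (∑ j, aA i j * c j) ≤ bA i := by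
            rw [hAeq] at hcA; exact hcA
          have hslack : ∀ i ∈ F, 0 < bA i - ∑ j, aA i j * c j := by
            intro i hiF
            have hpos : 0 < ∑ j, aA i j * w j := by
              simpa [hF] using hiF
            rcases lt_or_eq_of_le (hcAi i) with h | h
            · linarith
            · exact absurd (hw i h) (not_le.mpr hpos)
          set ε : ℝ := if hFne : F.Nonempty then
              min 1 (F.inf' hFne
                (fun i => (bA i - ∑ j, aA i j * c j) / (∑ j, aA i j * w j)))
            else 1 with hε
          have hεpos : 0 < ε := by
            rw [hε]
            split_ifs with hFne
            · refine lt_min one_pos ?_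
              rw [Finset.lt_inf'_iff]
              intro i hiF
              have hipos : 0 < ∑ j, aA i j * w j := by simpa [hF] using hiF
              exact div_pos (hslack i hiF) hipos
            · exact one_pos
          have hεle : ∀ i ∈ F, ε ≤ (bA i - ∑ j, aA i j * c j) / (∑ j, aA i j * w j) := by
            intro i hiF
            have hFne : F.Nonempty := ⟨i, hiF⟩
            rw [hε, dif_pos hFne]
            exact le_trans (min_le_right _ _) (Finset.inf'_le _ hiF)
          have hcw : c + ε • w ∈ A := by
            rw [hAeq]
            intro i
            have hsplit : (∑ j, aA i j * (c + ε • w) j)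
                = (∑ j, aA i j * c j) + ε * ∑ j, aA i j * w j := by
              rw [Finset.mul_sum, ← Finset.sum_add_distrib]
              exact Finset.sum_congr rfl fun j _ => by
                show aA i j * (c j + ε * w j) = _; ring
            rw [hsplit]
            by_cases hi : 0 < ∑ j, aA i j * w j
            · have hiF : i ∈ F := by simp [hF, hi]
              have h4 := (le_div_iff₀ hi).mp (hεle i hiF)
              linarith
            · push_neg at hi
              have h4 : ε * ∑ j, aA i j * w j ≤ 0 :=
                mul_nonpos_iff.mpr (Or.inl ⟨le_of_lt hεpos, hi⟩)
              linarith [hcAi i]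
          refine ⟨ε⁻¹, le_of_lt (inv_pos.mpr hεpos), (c + ε • w) - c, ?_, ?_⟩
          · rw [hD c]
            show ((c + ε • w) - c) + c ∈ A
            have h : ((c + ε • w) - c) + c = c + ε • w := by abel
            rw [h]; exact hcw
          · rw [show (c + ε • w) - c = ε • w by abel, smul_smul,
              inv_mul_cancel₀ (ne_of_gt hεpos), one_smul]
        have hzT : z ∈ T := (IsClosed.closure_subset_iff hTclosed).mpr hsub1 hzcl
        exact hz0 (hconeK z (hsub2 hzT) hzK)
      · -- c ∉ A : sequence argument
        obtain ⟨xbar, hxbarX, hexeq⟩ := hex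
        set cb : Fin m → ℝ := f xbar - e with hcb
        obtain ⟨u, hu, hulim⟩ := mem_closure_iff_seq_limit.mp hzcl
        simp only [coneGen, Set.mem_setOf_eq] at hu
        choose t ht d hd hud using hu
        by_cases hsmall : ∀ ε > 0, ∃ᶠ k in Filter.atTop, t k < ε
        · have hzbar : z ∈ closure (coneGen (((fun x => f x - cb) '' X) + K)) := by
            rw [Metric.mem_closure_iff]
            intro ε hεpos
            obtain ⟨N, hN⟩ := Metric.tendsto_atTop.mp hulim (ε/2) (by linarith)
            set δ : ℝ := ε / 2 / (‖c - cb‖ + 1) with hδ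
            have hδpos : 0 < δ := div_pos (by linarith) (by positivity)
            obtain ⟨k, hkN, hk⟩ := (Filter.frequently_atTop.mp (hsmall δ hδpos)) N
            refine ⟨t k • (d k + (c - cb)), ?_, ?_⟩
            · refine ⟨t k, ht k, d k + (c - cb), ?_, rfl⟩
              rw [hD cb]
              show (d k + (c - cb)) + cb ∈ A
              have h : (d k + (c - cb)) + cb = d k + c := by abel
              rw [h]
              have h2 := hd k; rw [hD c] at h2; exact h2
            · have h1 : dist z (u k) < ε/2 := by
                rw [dist_comm]; exact hN k hkN
              have h2 : t k • (d k + (c - cb)) = u k + t k • (c - cb) := by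
                rw [hud k, smul_add]
              rw [h2]
              have h3 : dist z (u k + t k • (c - cb))
                  ≤ dist z (u k) + dist (u k) (u k + t k • (c - cb)) := dist_triangle _ _ _
              have h4 : dist (u k) (u k + t k • (c - cb)) = ‖t k • (c - cb)‖ := by
                rw [dist_eq_norm]; simp
              have h5 : ‖t k • (c - cb)‖ = t k * ‖c - cb‖ := by
                rw [norm_smul, Real.norm_eq_abs, abs_of_nonneg (ht k)]
              have h6 : t k * ‖c - cb‖ < ε / 2 := by
                have h7 : δ * (‖c - cb‖ + 1) = ε / 2 :=
                  div_mul_cancel₀ _ (by positivity)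
                nlinarith [hk, ht k, norm_nonneg (c - cb)]
              calc dist z (u k + t k • (c - cb))
                  ≤ dist z (u k) + dist (u k) (u k + t k • (c - cb)) := h3
                _ < ε/2 + ε/2 := by rw [h4, h5]; exact add_lt_add h1 h6
                _ = ε := by ring
          have h : z ∈ closure (coneGen (((fun x => f x - cb) '' X) + K)) ∩ (-K) :=
            ⟨hzbar, hzK⟩
          rw [hexeq] at h
          exact hz0 h
        · push_neg at hsmall
          obtain ⟨ε₀, hε₀pos, hε₀⟩ := hsmall
          obtain ⟨N₀, hN₀⟩ := Filter.eventually_atTop.mp hε₀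
          have htlb : ∀ k ≥ N₀, ε₀ ≤ t k := fun k hk => hN₀ k hk
          by_cases hbig : ∀ R : ℝ, ∃ᶠ k in Filter.atTop, R < t k
          · exfalso
            apply hcA
            rw [← hAclosed.closure_eq, Metric.mem_closure_iff]
            intro ε hεpos
            obtain ⟨N, hN⟩ := Metric.tendsto_atTop.mp hulim 1 one_pos
            obtain ⟨k, hkN, hk⟩ :=
              Filter.frequently_atTop.mp (hbig ((‖z‖ + 1)/ε)) (max N N₀)
            have htk : 0 < t k :=
              lt_of_lt_of_le hε₀pos (htlb k (le_trans (le_max_right _ _) hkN))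
            refine ⟨d k + c, ?_, ?_⟩
            · have h2 := hd k; rw [hD c] at h2; exact h2
            · have hdist : dist c (d k + c) = ‖d k‖ := by
                rw [dist_eq_norm]; simp
              rw [hdist]
              have hdk : d k = (t k)⁻¹ • u k := by
                rw [hud k, smul_smul, inv_mul_cancel₀ (ne_of_gt htk), one_smul]
              have hnu : ‖u k‖ < ‖z‖ + 1 := by
                have h5 := hN k (le_trans (le_max_left _ _) hkN)
                calc ‖u k‖ = ‖z + (u k - z)‖ := by rw [show z + (u k - z) = u k from by abel]
                  _ ≤ ‖z‖ + ‖u k - z‖ := norm_add_le _ _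
                  _ < ‖z‖ + 1 := by
                      have : ‖u k - z‖ = dist (u k) z := (dist_eq_norm _ _).symm
                      linarith [this ▸ h5]
              have hεz : ((‖z‖ + 1)/ε) * ε = ‖z‖ + 1 :=
                div_mul_cancel₀ _ (ne_of_gt hεpos)
              have h7 : ‖u k‖ < t k * ε := by nlinarith
              have h8 : ‖d k‖ = (t k)⁻¹ * ‖u k‖ := by
                rw [hdk, norm_smul, Real.norm_eq_abs,
                  abs_of_nonneg (le_of_lt (inv_pos.mpr htk))]
              rw [h8]
              calc (t k)⁻¹ * ‖u k‖ < (t k)⁻¹ * (t k * ε) :=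
                    mul_lt_mul_of_pos_left h7 (inv_pos.mpr htk)
                _ = ε := by rw [← mul_assoc, inv_mul_cancel₀ (ne_of_gt htk), one_mul]
          · push_neg at hbig
            obtain ⟨R, hR⟩ := hbig
            obtain ⟨N₁, hN₁⟩ := Filter.eventually_atTop.mp hR
            set N : ℕ := max N₀ N₁ with hNdef
            have hIcc : ∀ k : ℕ, t (k + N) ∈ Set.Icc ε₀ R := by
              intro k
              have hge : N ≤ k + N := Nat.le_add_left N k
              constructor
              · exact htlb (k + N) (le_trans (le_max_left _ _) hge)
              · exact hN₁ (k + N) (le_trans (le_max_right _ _) hge)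
            obtain ⟨t₀, ht₀Icc, φ, hφmono, hφlim⟩ :=
              (isCompact_Icc).tendsto_subseq hIcc
            have ht₀pos : 0 < t₀ := lt_of_lt_of_le hε₀pos ht₀Icc.1
            set ψ : ℕ → ℕ := fun k => φ k + N with hψ
            have hψtend : Filter.Tendsto ψ Filter.atTop Filter.atTop :=
              Filter.tendsto_atTop_mono (fun k => Nat.le_add_right (φ k) N |>.trans (le_refl _))
                hφmono.tendsto_atTop |>.congr (fun k => rfl) |>.mono_right le_rfl
            have huψ : Filter.Tendsto (fun k => u (ψ k)) Filter.atTop (nhds z) :=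
              hulim.comp hψtend
            have htψ : Filter.Tendsto (fun k => t (ψ k)) Filter.atTop (nhds t₀) := hφlim
            have hinv : Filter.Tendsto (fun k => (t (ψ k))⁻¹) Filter.atTop (nhds t₀⁻¹) :=
              htψ.inv₀ (ne_of_gt ht₀pos)
            have hdeq : ∀ k, d (ψ k) = (t (ψ k))⁻¹ • u (ψ k) := by
              intro k
              have htkpos : 0 < t (ψ k) :=
                lt_of_lt_of_le hε₀pos (htlb (ψ k)
                  (le_trans (le_max_left _ _) (Nat.le_add_left N (φ k))))
              rw [hud (ψ k), smul_smul, inv_mul_cancel₀ (ne_of_gt htkpos), one_smul]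
            have hdψ : Filter.Tendsto (fun k => d (ψ k)) Filter.atTop
                (nhds (t₀⁻¹ • z)) := by
              have h3 := hinv.smul huψ
              exact h3.congr (fun k => (hdeq k).symm)
            have hDclosed : IsClosed (((fun y => f y - c) '' X) + K) := by
              rw [hD c]
              exact IsClosed.preimage (continuous_id.add continuous_const) hAclosed
            have hmemD : t₀⁻¹ • z ∈ (((fun y => f y - c) '' X) + K) := by
              rw [← hDclosed.closure_eq]
              exact mem_closure_of_tendsto hdψ (Filter.Eventually.of_forall fun k => hd (ψ k))
            have hmemK : t₀⁻¹ • z ∈ -K := by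
              rw [Set.mem_neg, ← smul_neg]
              exact hKsmul (le_of_lt (inv_pos.mpr ht₀pos)) (Set.mem_neg.mp hzK)
            have hzero := hDK (t₀⁻¹ • z) (by rw [hD c] at hmemD; exact hmemD) hmemK
            apply hz0
            rcases smul_eq_zero.mp hzero with h | h
            · exact absurd h (inv_ne_zero (ne_of_gt ht₀pos))
            · exact h
end

section
/- Let X ⊆ ℝ^n be a nonempty polyhedral convex set, f : ℝ^n → ℝ^m an affine map, the ordering cone K = ℝ^m_+, and ε ∈ ℝ^m_+ \ {0}. If there exists at least one x̄ ∈ X with cl cone[f(X) + ℝ^m_+ − (f(x̄) − ε)] ∩ (−ℝ^m_+) = {0}, then the set of points x ∈ X satisfying cl cone[f(X) + ℝ^m_+ − (f(x) − ε)] ∩ (−ℝ^m_+) = {0} coincides with the set of ε-efficient solutions; that is, either the ε-properly efficient solution set is empty or it equals the ε-efficient solution set. -/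
open Set Pointwise

def IsPolyCone {k : ℕ} (C : Set (Fin k → ℝ)) : Prop :=
  ∃ S : Finset (Fin k → ℝ), C = {x | ∀ a ∈ S, ∑ j, a j * x j ≤ 0}

lemma IsPolyCone.isClosed {k : ℕ} {C : Set (Fin k → ℝ)} (h : IsPolyCone C) : IsClosed C := by
  obtain ⟨S, rfl⟩ := h
  have : {x : Fin k → ℝ | ∀ a ∈ S, ∑ j, a j * x j ≤ 0} = ⋂ a ∈ S, {x | ∑ j, a j * x j ≤ 0} := by
    ext x; simp
  rw [this]
  exact isClosed_biInter fun a _ => isClosed_le (by fun_prop) continuous_const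

lemma sum_split {k : ℕ} (a x : Fin (k+1) → ℝ) :
    ∑ j, a j * x j = (∑ j : Fin k, a j.castSucc * x j.castSucc) + a (Fin.last k) * x (Fin.last k) :=
  Fin.sum_univ_castSucc _

lemma dot_comb {k : ℕ} (c d : ℝ) (u v x : Fin k → ℝ) :
    ∑ j, (c • u + d • v) j * x j = c * (∑ j, u j * x j) + d * (∑ j, v j * x j) := by
  simp [add_mul, Finset.sum_add_distrib, Finset.mul_sum, mul_assoc]

lemma polyCone_proj {k : ℕ} {C : Set (Fin (k+1) → ℝ)} (h : IsPolyCone C) :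
    IsPolyCone ((fun x => x ∘ Fin.castSucc) '' C) := by
  classical
  obtain ⟨S, rfl⟩ := h
  refine ⟨(S.filter (fun a => a (Fin.last k) = 0)).image (fun a => a ∘ Fin.castSucc) ∪
    ((S.filter (fun a => 0 < a (Fin.last k))) ×ˢ (S.filter (fun a => a (Fin.last k) < 0))).image
      (fun q => (-(q.2 (Fin.last k))) • (q.1 ∘ Fin.castSucc)
        + (q.1 (Fin.last k)) • (q.2 ∘ Fin.castSucc)), ?_⟩
  ext x'
  simp only [Set.mem_image, Set.mem_setOf_eq]
  constructor
  · rintro ⟨x, hx, rfl⟩ w hw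
    simp only [Finset.mem_union, Finset.mem_image, Finset.mem_filter, Finset.mem_product,
      Prod.exists] at hw
    rcases hw with ⟨a, ⟨haS, ha0⟩, rfl⟩ | ⟨a, b, ⟨⟨haS, hapos⟩, hbS, hbneg⟩, rfl⟩
    · have := hx a haS
      rw [sum_split] at this
      simpa [Function.comp, ha0] using this
    · rw [dot_comb]
      have ha := hx a haS; rw [sum_split] at ha
      have hb := hx b hbS; rw [sum_split] at hb
      have h1 : ∑ j : Fin k, (a ∘ Fin.castSucc) j * (x ∘ Fin.castSucc) j
          = ∑ j : Fin k, a j.castSucc * x j.castSucc := rfl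
      have h2 : ∑ j : Fin k, (b ∘ Fin.castSucc) j * (x ∘ Fin.castSucc) j
          = ∑ j : Fin k, b j.castSucc * x j.castSucc := rfl
      rw [h1, h2]
      nlinarith [ha, hb, hapos, hbneg]
  · intro hx'
    -- build the last coordinate
    set A : (Fin (k+1) → ℝ) → ℝ := fun a => ∑ j : Fin k, a j.castSucc * x' j with hA
    set U := S.filter (fun a => 0 < a (Fin.last k)) with hU
    set Lo := S.filter (fun a => a (Fin.last k) < 0) with hLo
    set ub : (Fin (k+1) → ℝ) → ℝ := fun a => -(A a) / a (Fin.last k) with hub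
    have key : ∀ a ∈ U, ∀ b ∈ Lo, ub b ≤ ub a := by
      intro a ha b hb
      simp only [hU, hLo, Finset.mem_filter] at ha hb
      have hw := hx' _ (Finset.mem_union_right _ (Finset.mem_image.2
        ⟨(a, b), Finset.mem_product.2 ⟨Finset.mem_filter.2 ha, Finset.mem_filter.2 hb⟩, rfl⟩))
      rw [dot_comb] at hw
      have h1 : ∑ j : Fin k, (a ∘ Fin.castSucc) j * x' j = A a := rfl
      have h2 : ∑ j : Fin k, (b ∘ Fin.castSucc) j * x' j = A b := rfl
      rw [h1, h2] at hw
      show -(A b) / b (Fin.last k) ≤ -(A a) / a (Fin.last k)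
      have e1 : -(A b) / b (Fin.last k) = A b / (-(b (Fin.last k))) := by
        ring
      rw [e1, div_le_div_iff₀ (neg_pos.2 hb.2) ha.2]
      nlinarith [hw]
    set t : ℝ := if hUne : U.Nonempty then U.inf' hUne ub
      else if hLne : Lo.Nonempty then Lo.sup' hLne ub else 0 with ht
    have hup : ∀ a ∈ U, t ≤ ub a := by
      intro a ha
      rw [ht]; rw [dif_pos ⟨a, ha⟩]; exact Finset.inf'_le _ ha
    have hlow : ∀ b ∈ Lo, ub b ≤ t := by
      intro b hb
      rw [ht]
      by_cases hUne : U.Nonempty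
      · rw [dif_pos hUne]
        exact Finset.le_inf' _ _ fun a ha => key a ha b hb
      · rw [dif_neg hUne, dif_pos ⟨b, hb⟩]; exact Finset.le_sup' _ hb
    refine ⟨Fin.snoc x' t, ?_, by ext j; simp⟩
    intro a haS
    rw [sum_split]
    have hAa : ∑ j : Fin k, a j.castSucc * (Fin.snoc x' t : Fin (k+1) → ℝ) j.castSucc = A a := by
      simp [hA]
    rw [hAa, Fin.snoc_last]
    rcases lt_trichotomy (a (Fin.last k)) 0 with hneg | hzero | hpos
    · have hb : a ∈ Lo := Finset.mem_filter.2 ⟨haS, hneg⟩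
      have := hlow a hb
      rw [hub] at this
      have := (div_le_iff_of_neg hneg).1 this
      linarith
    · have := hx' _ (Finset.mem_union_left _ (Finset.mem_image.2
        ⟨a, Finset.mem_filter.2 ⟨haS, hzero⟩, rfl⟩))
      have h1 : ∑ j : Fin k, (a ∘ Fin.castSucc) j * x' j = A a := rfl
      rw [h1] at this
      rw [hzero]; linarith
    · have hb : a ∈ U := Finset.mem_filter.2 ⟨haS, hpos⟩
      have := hup a hb
      rw [hub, le_div_iff₀ hpos] at this
      linarith

lemma polyCone_projN {k : ℕ} : ∀ (N : ℕ) (C : Set (Fin (k + N) → ℝ)), IsPolyCone C →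
    IsPolyCone ((fun x (i : Fin k) => x (Fin.castAdd N i)) '' C)
  | 0, C, h => by
    have : (fun (x : Fin (k+0) → ℝ) (i : Fin k) => x (Fin.castAdd 0 i)) = fun x => x := by
      funext x i
      congr 1
    rw [this, Set.image_id']
    exact h
  | (N+1), C, h => by
    have h1 : IsPolyCone ((fun x => x ∘ Fin.castSucc) '' C) := polyCone_proj h
    have h2 := polyCone_projN N _ h1
    rw [← Set.image_comp] at h2
    convert h2 using 2
    rfl

lemma sum_split_add {m N : ℕ} (g : Fin (m + N) → ℝ) :
    ∑ j, g j = (∑ l : Fin m, g (Fin.castAdd N l)) + ∑ j : Fin N, g (Fin.natAdd m j) :=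
  Fin.sum_univ_add _

lemma polyCone_matrix_image {N m : ℕ} (M : Fin m → Fin N → ℝ) {C : Set (Fin N → ℝ)}
    (h : IsPolyCone C) : IsPolyCone ((fun x (i : Fin m) => ∑ j, M i j * x j) '' C) := by
  classical
  obtain ⟨S, hS⟩ := h
  set G : Set (Fin (m + N) → ℝ) :=
    {z | (fun j => z (Fin.natAdd m j)) ∈ C ∧
      ∀ l, z (Fin.castAdd N l) = ∑ j, M l j * z (Fin.natAdd m j)} with hG
  have hGpoly : IsPolyCone G := by
    refine ⟨S.image (fun s => Fin.append (0 : Fin m → ℝ) s) ∪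
      (Finset.univ.image (fun l : Fin m => Fin.append (Pi.single l (1:ℝ)) (fun j => -(M l j)))) ∪
      (Finset.univ.image (fun l : Fin m => Fin.append (Pi.single l (-1:ℝ)) (M l))), ?_⟩
    have dot1 : ∀ (s : Fin N → ℝ) (z : Fin (m+N) → ℝ),
        ∑ j, Fin.append (0 : Fin m → ℝ) s j * z j = ∑ j, s j * z (Fin.natAdd m j) := by
      intro s z; rw [sum_split_add]; simp
    have dot2 : ∀ (u : Fin m → ℝ) (v : Fin N → ℝ) (z : Fin (m+N) → ℝ),
        ∑ j, Fin.append u v j * z j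
          = (∑ l, u l * z (Fin.castAdd N l)) + ∑ j, v j * z (Fin.natAdd m j) := by
      intro u v z; rw [sum_split_add]; simp
    have dotsingle : ∀ (l : Fin m) (c : ℝ) (w : Fin m → ℝ),
        ∑ i, (Pi.single l c : Fin m → ℝ) i * w i = c * w l := by
      intro l c w
      rw [Finset.sum_eq_single l]
      · simp
      · intro i _ hi; simp [Pi.single_apply, hi]
      · simp
    ext z
    simp only [hG, Set.mem_setOf_eq, hS, Finset.mem_union, Finset.mem_image,
      Finset.mem_univ, true_and, Set.mem_setOf_eq]
    constructor
    · rintro ⟨hzC, hzeq⟩ w hw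
      rcases hw with (⟨s, hsS, rfl⟩ | ⟨l, rfl⟩) | ⟨l, rfl⟩
      · rw [dot1]; exact hzC s hsS
      · rw [dot2, dotsingle]
        have := hzeq l
        simp only [neg_mul]
        rw [Finset.sum_neg_distrib]
        linarith [this]
      · rw [dot2, dotsingle]
        have := hzeq l
        linarith [this]
    · intro hz
      constructor
      · intro s hsS
        have := hz _ (Or.inl (Or.inl ⟨s, hsS, rfl⟩))
        rwa [dot1] at this
      · intro l
        have h1 := hz _ (Or.inl (Or.inr ⟨l, rfl⟩))
        have h2 := hz _ (Or.inr ⟨l, rfl⟩)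
        rw [dot2, dotsingle] at h1 h2
        simp only [neg_mul, one_mul] at h1 h2
        rw [Finset.sum_neg_distrib] at h1
        linarith
  have himg : (fun x (i : Fin m) => ∑ j, M i j * x j) '' C
      = (fun z (i : Fin m) => z (Fin.castAdd N i)) '' G := by
    ext y
    constructor
    · rintro ⟨x, hx, rfl⟩
      refine ⟨Fin.append (fun i => ∑ j, M i j * x j) x, ⟨?_, ?_⟩, ?_⟩
      · simpa [Fin.append_right] using hx
      · intro l; simp [Fin.append_left, Fin.append_right]
      · funext i; simp [Fin.append_left]
    · rintro ⟨z, ⟨hzC, hzeq⟩, rfl⟩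
      exact ⟨_, hzC, by funext i; exact (hzeq i).symm⟩
  rw [himg]
  exact polyCone_projN N G hGpoly

lemma dot_append {p q : ℕ} (u : Fin p → ℝ) (v : Fin q → ℝ) (z : Fin (p+q) → ℝ) :
    ∑ j, Fin.append u v j * z j
      = (∑ l : Fin p, u l * z (Fin.castAdd q l)) + ∑ j : Fin q, v j * z (Fin.natAdd p j) := by
  rw [sum_split_add]; simp

lemma sum_snoc {k : ℕ} (w : Fin k → ℝ) (c : ℝ) (g : Fin (k+1) → ℝ) :
    ∑ j, (Fin.snoc w c : Fin (k+1) → ℝ) j * g j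
      = (∑ j : Fin k, w j * g j.castSucc) + c * g (Fin.last k) := by
  rw [sum_split]; simp

lemma dot_single {k : ℕ} (l : Fin k) (c : ℝ) (w : Fin k → ℝ) :
    ∑ i, (Pi.single l c : Fin k → ℝ) i * w i = c * w l := by
  rw [Finset.sum_eq_single l]
  · simp
  · intro i _ hi; simp [Pi.single_apply, hi]
  · simp


/-- In a linear vector optimization problem with ordering cone `ℝ^m_+` and
`ε ∈ ℝ^m_+ \ {0}`: if there exists at least one ε-properly efficient solution (in the
Benson sense), then the ε-properly efficient solution set coincides with the ε-efficient
solution set. -/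
theorem stmt_10 {n m : ℕ} (X : Set (Fin n → ℝ)) (hXne : X.Nonempty)
    (hXpoly : ∃ (p : ℕ) (a : Fin p → Fin n → ℝ) (b : Fin p → ℝ),
      X = {x | ∀ i, ∑ j, a i j * x j ≤ b i})
    (f : (Fin n → ℝ) →ᵃ[ℝ] (Fin m → ℝ))
    (ε : Fin m → ℝ) (hε : ∀ i, 0 ≤ ε i) (hε0 : ε ≠ 0)
    (hex : ∃ xbar ∈ X,
      closure (coneGen (((fun x => f x - (f xbar - ε)) '' X) + orthant m))
        ∩ (-(orthant m)) = {0}) :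
    {x | x ∈ X ∧
        closure (coneGen (((fun y => f y - (f x - ε)) '' X) + orthant m))
          ∩ (-(orthant m)) = {0}} =
      {x | x ∈ X ∧ ¬ ∃ y ∈ X, f x - ε - f y ∈ orthant m ∧ f y ≠ f x - ε} := by
  classical
  obtain ⟨p, a, b, hX⟩ := hXpoly
  obtain ⟨xbar, hxbarX, hbar⟩ := hex
  have hf : ∀ y, f y = f.linear y + f 0 := by
    intro y
    have := f.map_vadd (0 : Fin n → ℝ) y
    simpa [vadd_eq_add] using this
  ext x
  simp only [Set.mem_setOf_eq]
  constructor
  · rintro ⟨hxX, hcl⟩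
    refine ⟨hxX, ?_⟩
    rintro ⟨y, hyX, hdom, hne⟩
    have hd : f y - (f x - ε) ∈ closure (coneGen (((fun y => f y - (f x - ε)) '' X) + orthant m))
        ∩ (-(orthant m)) := by
      constructor
      · apply subset_closure
        refine ⟨1, zero_le_one, (f y - (f x - ε)) + 0, ?_, by simp⟩
        exact Set.add_mem_add ⟨y, hyX, rfl⟩ (fun i => le_refl 0)
      · rw [Set.mem_neg]
        have : -(f y - (f x - ε)) = f x - ε - f y := by abel
        rw [this]; exact hdom
    rw [hcl, Set.mem_singleton_iff, sub_eq_zero] at hd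
    exact hne hd
  · rintro ⟨hxX, heff⟩
    refine ⟨hxX, ?_⟩
    have heff' : ∀ y ∈ X, f x - ε - f y ∈ orthant m → f y = f x - ε := by
      intro y hy hdom
      by_contra hne
      exact heff ⟨y, hy, hdom, hne⟩
    -- the matrix and the polyhedral cone
    set F : Fin m → Fin n → ℝ := fun l j => f.linear (fun i => if j = i then 1 else 0) l with hFdef
    have hF : ∀ (y : Fin n → ℝ) (l : Fin m), f.linear y l = ∑ j, F l j * y j := by
      intro y l
      rw [LinearMap.pi_apply_eq_sum_univ f.linear y]
      rw [Finset.sum_apply]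
      exact Finset.sum_congr rfl fun j _ => by simp [hFdef, mul_comm]
    set c : Fin m → ℝ := f 0 - (f x - ε) with hc
    set Mx : Fin m → Fin ((n+1)+m) → ℝ :=
      fun l => Fin.append (Fin.snoc (F l) (c l)) (Pi.single l 1) with hMxdef
    have hMx : ∀ (z : Fin ((n+1)+m) → ℝ) (l : Fin m), (∑ j, Mx l j * z j)
        = f.linear (fun j => z (Fin.castAdd m j.castSucc)) l
          + z (Fin.castAdd m (Fin.last n)) * c l + z (Fin.natAdd (n+1) l) := by
      intro z l
      rw [hMxdef]
      rw [dot_append, sum_snoc, dot_single, hF]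
      ring
    set D : Set (Fin ((n+1)+m) → ℝ) :=
      {z | (∀ i, ∑ j : Fin n, a i j * z (Fin.castAdd m j.castSucc)
              ≤ b i * z (Fin.castAdd m (Fin.last n))) ∧
        0 ≤ z (Fin.castAdd m (Fin.last n)) ∧ ∀ l, 0 ≤ z (Fin.natAdd (n+1) l)} with hD
    have hDpoly : IsPolyCone D := by
      refine ⟨(Finset.univ.image fun i : Fin p =>
            Fin.append (Fin.snoc (a i) (-(b i))) (0 : Fin m → ℝ)) ∪
          {Fin.append (Fin.snoc (0 : Fin n → ℝ) (-1)) (0 : Fin m → ℝ)} ∪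
          (Finset.univ.image fun l : Fin m =>
            Fin.append (0 : Fin (n+1) → ℝ) (Pi.single l (-1))), ?_⟩
      ext z
      simp only [hD, Set.mem_setOf_eq, Finset.mem_union, Finset.mem_image, Finset.mem_singleton,
        Finset.mem_univ, true_and]
      constructor
      · rintro ⟨h1, h2, h3⟩ w hw
        rcases hw with (⟨i, rfl⟩ | rfl) | ⟨l, rfl⟩
        · rw [dot_append, sum_snoc]
          have := h1 i
          simp only [Pi.zero_apply, zero_mul, Finset.sum_const_zero]
          linarith
        · rw [dot_append, sum_snoc]
          simp only [Pi.zero_apply, zero_mul, Finset.sum_const_zero]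
          linarith [h2]
        · rw [dot_append, dot_single]
          simp only [Pi.zero_apply, zero_mul, Finset.sum_const_zero]
          linarith [h3 l]
      · intro hz
        refine ⟨?_, ?_, ?_⟩
        · intro i
          have := hz _ (Or.inl (Or.inl ⟨i, rfl⟩))
          rw [dot_append, sum_snoc] at this
          simp only [Pi.zero_apply, zero_mul, Finset.sum_const_zero] at this
          linarith
        · have := hz _ (Or.inl (Or.inr rfl))
          rw [dot_append, sum_snoc] at this
          simp only [Pi.zero_apply, zero_mul, Finset.sum_const_zero] at this
          linarith
        · intro l
          have := hz _ (Or.inr ⟨l, rfl⟩)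
          rw [dot_append, dot_single] at this
          simp only [Pi.zero_apply, zero_mul, Finset.sum_const_zero] at this
          linarith
    set W : Set (Fin m → ℝ) := (fun z (i : Fin m) => ∑ j, Mx i j * z j) '' D with hW
    have hWclosed : IsClosed W := (polyCone_matrix_image Mx hDpoly).isClosed
    -- cone ⊆ W
    have hsub : coneGen (((fun y => f y - (f x - ε)) '' X) + orthant m) ⊆ W := by
      rintro v ⟨t, ht, d, hd, rfl⟩
      rw [Set.mem_add] at hd
      obtain ⟨d1, hd1, kk, hkk, rfl⟩ := hd
      obtain ⟨y, hyX, rfl⟩ := hd1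
      refine ⟨Fin.append (Fin.snoc (t • y) t) (t • kk), ⟨?_, ?_, ?_⟩, ?_⟩
      · intro i
        simp only [Fin.append_left, Fin.snoc_castSucc, Fin.snoc_last, Pi.smul_apply,
          smul_eq_mul]
        have h1 : ∑ j : Fin n, a i j * (t * y j) = t * ∑ j : Fin n, a i j * y j := by
          rw [Finset.mul_sum]; exact Finset.sum_congr rfl fun j _ => by ring
        rw [h1]
        have hxy : ∑ j : Fin n, a i j * y j ≤ b i := by
          rw [hX] at hyX; exact hyX i
        nlinarith
      · simp only [Fin.append_left, Fin.snoc_last]; exact ht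
      · intro l
        simp only [Fin.append_right, Pi.smul_apply, smul_eq_mul]
        exact mul_nonneg ht (hkk l)
      · funext l
        show (∑ j, Mx l j * _) = _
        rw [hMx]
        simp only [Fin.append_left, Fin.append_right, Fin.snoc_castSucc, Fin.snoc_last,
          Pi.smul_apply, smul_eq_mul]
        have harg : (fun j => t * y j) = t • y := by funext j; simp
        rw [harg, map_smul]
        simp only [Pi.smul_apply, smul_eq_mul, Pi.add_apply, Pi.sub_apply]
        rw [hc]
        have hfy := hf y
        have : f y l = f.linear y l + f 0 l := by rw [hfy]; simp
        simp only [Pi.sub_apply]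
        ring_nf
        nlinarith [this]
    apply Set.eq_of_subset_of_subset
    · rintro w ⟨hwcl, hwneg⟩
      have hwW : w ∈ W := closure_minimal hsub hWclosed hwcl
      rw [hW] at hwW
      obtain ⟨z, hzD, rfl⟩ := hwW
      obtain ⟨hcons, htpos, hkpos⟩ := hzD
      set t := z (Fin.castAdd m (Fin.last n)) with htdef
      set ylin : Fin n → ℝ := fun j => z (Fin.castAdd m j.castSucc) with hylin
      set kk : Fin m → ℝ := fun l => z (Fin.natAdd (n+1) l) with hkkdef
      have hwval : ∀ l, (∑ j, Mx l j * z j) = f.linear ylin l + t * c l + kk l :=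
        fun l => hMx z l
      have hwneg' : ∀ l, (∑ j, Mx l j * z j) ≤ 0 := by
        rw [Set.mem_neg] at hwneg
        intro l
        have := hwneg l
        simpa using this
      show (fun i => ∑ j, Mx i j * z j) ∈ ({0} : Set (Fin m → ℝ))
      rw [Set.mem_singleton_iff]
      rcases eq_or_lt_of_le htpos with ht0 | htpos'
      · -- t = 0 : recession direction, use hbar
        have hveq : (fun i => ∑ j, Mx i j * z j) = f.linear ylin + kk := by
          funext l; rw [hwval l, ← ht0]; simp
        rw [hveq]
        have htend : Filter.Tendsto (fun s : ℕ => (1/((s:ℝ)+1)) • ε + (f.linear ylin + kk))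
            Filter.atTop (nhds (f.linear ylin + kk)) := by
          have h0 := tendsto_one_div_add_atTop_nhds_zero_nat (𝕜 := ℝ)
          have := (h0.smul_const ε).add_const (f.linear ylin + kk)
          simpa using this
        have hmemseq : ∀ s : ℕ, (1/((s:ℝ)+1)) • ε + (f.linear ylin + kk)
            ∈ coneGen (((fun yy => f yy - (f xbar - ε)) '' X) + orthant m) := by
          intro s
          have hq0 : (0:ℝ) < (s:ℝ)+1 := by positivity
          refine ⟨1/((s:ℝ)+1), by positivity,
            (f (xbar + ((s:ℝ)+1) • ylin) - (f xbar - ε)) + ((s:ℝ)+1) • kk, ?_, ?_⟩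
          · apply Set.add_mem_add
            · refine ⟨xbar + ((s:ℝ)+1) • ylin, ?_, rfl⟩
              rw [hX]; intro i
              have hxbar : ∑ j, a i j * xbar j ≤ b i := by rw [hX] at hxbarX; exact hxbarX i
              have hylin0 : ∑ j : Fin n, a i j * ylin j ≤ 0 := by
                have h6 := hcons i
                rw [← ht0] at h6
                simpa using h6
              have hsplit : ∑ j, a i j * (xbar + ((s:ℝ)+1) • ylin) j
                  = (∑ j, a i j * xbar j) + ((s:ℝ)+1) * ∑ j : Fin n, a i j * ylin j := by
                rw [Finset.mul_sum, ← Finset.sum_add_distrib]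
                refine Finset.sum_congr rfl fun j _ => ?_
                simp only [Pi.add_apply, Pi.smul_apply, smul_eq_mul]
                ring
              rw [hsplit]
              nlinarith
            · intro l
              simp only [Pi.smul_apply, smul_eq_mul]
              exact mul_nonneg hq0.le (hkpos l)
          · funext l
            have h1 : f (xbar + ((s:ℝ)+1) • ylin) = f xbar + ((s:ℝ)+1) • f.linear ylin := by
              rw [hf (xbar + ((s:ℝ)+1) • ylin), hf xbar, map_add, map_smul]
              abel
            rw [h1]
            simp only [Pi.add_apply, Pi.smul_apply, Pi.sub_apply, smul_eq_mul]
            field_simp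
            ring
        have hmem0 : f.linear ylin + kk ∈ ({0} : Set (Fin m → ℝ)) := by
          rw [← hbar]
          refine ⟨mem_closure_of_tendsto htend (Filter.Eventually.of_forall hmemseq), ?_⟩
          rw [Set.mem_neg]
          intro l
          have h7 := hwneg' l
          rw [hwval l, ← ht0] at h7
          simp only [Pi.neg_apply, Pi.add_apply]
          linarith
        exact Set.mem_singleton_iff.1 hmem0
      · -- t > 0 : use efficiency
        set y : Fin n → ℝ := (t⁻¹) • ylin with hy
        have hyX : y ∈ X := by
          rw [hX]; intro i
          have h2 : ∑ j : Fin n, a i j * (t⁻¹ * ylin j) = t⁻¹ * ∑ j : Fin n, a i j * ylin j := by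
            rw [Finset.mul_sum]; exact Finset.sum_congr rfl fun j _ => by ring
          simp only [hy, Pi.smul_apply, smul_eq_mul]
          rw [h2]
          have h3 := mul_le_mul_of_nonneg_left (hcons i) (inv_nonneg.2 htpos'.le)
          have h4 : t⁻¹ * (b i * t) = b i := by field_simp
          linarith
        have hlin : ∀ l, f.linear ylin l = t * f.linear y l := by
          intro l
          rw [hy, map_smul]
          simp only [Pi.smul_apply, smul_eq_mul]
          field_simp
        have hk'pos : ∀ l, 0 ≤ t⁻¹ * kk l := fun l => mul_nonneg (inv_nonneg.2 htpos'.le) (hkpos l)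
        have hkk' : ∀ l, kk l = t * (t⁻¹ * kk l) := by
          intro l; field_simp
        have hwval2 : ∀ l, (∑ j, Mx l j * z j) = t * ((f y l - (f x - ε) l) + t⁻¹ * kk l) := by
          intro l
          rw [hwval l]
          rw [hf y]
          simp only [hc, Pi.add_apply, Pi.sub_apply]
          rw [hlin l]
          nlinarith [hkk' l]
        have hdom : f x - ε - f y ∈ orthant m := by
          intro l
          have h5 := hwneg' l
          rw [hwval2 l] at h5
          have h5' : t * (f y l - (f x - ε) l + t⁻¹ * kk l) ≤ t * 0 := by linarith
          have h6 := le_of_mul_le_mul_left h5' htpos'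
          simp only [Pi.sub_apply] at h6 ⊢
          linarith [hk'pos l]
        have hyeq := heff' y hyX hdom
        funext l
        rw [hwval2 l, hyeq]
        have h8 := hwneg' l
        rw [hwval2 l, hyeq] at h8
        have h9 : 0 ≤ t * (((f x - ε) l - (f x - ε) l) + t⁻¹ * kk l) := by
          have := hk'pos l
          nlinarith
        simp only [Pi.zero_apply]
        linarith
    · intro w hw
      rw [Set.mem_singleton_iff] at hw
      subst hw
      obtain ⟨y0, hy0⟩ := hXne
      constructor
      · apply subset_closure
        exact ⟨0, le_refl 0, (f y0 - (f x - ε)) + 0,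
          Set.add_mem_add ⟨y0, hy0, rfl⟩ (fun i => le_refl 0), by simp⟩
      · rw [Set.mem_neg]
        intro l
        simp
end

section
/- Let n = m = 2, X = K = ℝ²_+, f(x₁, x₂) = (−x₁, x₂), and let ε = (ε₁, ε₂) ∈ ℝ²_+ with ε₂ > 0. Then no point of X is an ε-properly efficient solution; equivalently, for every x̄ ∈ X, cl cone[f(X) − (f(x̄) − ε)] ∩ (−ℝ²_+) ≠ {0}. Moreover the ε-efficient solution set is nonempty. -/
open Set Pointwise

/-- Example: `X = K = ℝ²₊`, `f(x₁,x₂) = (-x₁, x₂)`, `ε = (ε₁,ε₂) ∈ ℝ²₊` with `ε₂ > 0`.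
No point of `X` is ε-properly efficient; equivalently, for every `x̄ ∈ X`,
`cl cone [f(X) - (f(x̄) - ε)] ∩ (-ℝ²₊) ≠ {0}`. Moreover the ε-efficient solution set is
nonempty. -/
theorem stmt_12 (ε : Fin 2 → ℝ) (hε1 : 0 ≤ ε 0) (hε2 : 0 < ε 1) :
    (∀ xbar ∈ orthant 2,
        ¬ IsEpsProperEff (orthant 2) (fun x : Fin 2 → ℝ => ![-x 0, x 1]) ε xbar) ∧
    (∀ xbar ∈ orthant 2,
        closure (coneGen
            ((fun x : Fin 2 → ℝ => ![-x 0, x 1] - (![-xbar 0, xbar 1] - ε)) '' orthant 2))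
          ∩ (-(orthant 2)) ≠ {0}) ∧
    (∃ xbar : Fin 2 → ℝ,
        IsEpsEff (orthant 2) (fun x : Fin 2 → ℝ => ![-x 0, x 1]) ε xbar) := by
  refine ⟨?_, ?_, ?_⟩
  · -- no ε-properly efficient point
    rintro xbar hxbar ⟨-, M, hM, hprop⟩
    set x : Fin 2 → ℝ := ![xbar 0 + ε 0 + M * ε 1 + 1, xbar 1] with hxdef
    have hx : x ∈ orthant 2 := by
      intro i
      fin_cases i <;> simp [hxdef]
      · nlinarith [hxbar 0, hM.le, hε2.le]
      · exact hxbar 1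
    have hlt : (![-x 0, x 1] : Fin 2 → ℝ) 0 < (![-xbar 0, xbar 1] : Fin 2 → ℝ) 0 - ε 0 := by
      simp [hxdef]
      nlinarith [hM.le, hε2.le]
    obtain ⟨j, hj1, hj2⟩ := hprop 0 x hx hlt
    simp only [hxdef, Matrix.cons_val_zero] at hlt
    fin_cases j
    · simp only [Fin.zero_eta, Matrix.cons_val_zero, hxdef] at hj1
      linarith
    · simp only [Fin.mk_one, Matrix.cons_val_one, Matrix.head_cons, Matrix.cons_val_zero,
        hxdef] at hj1 hj2
      rw [div_le_iff₀ (by linarith)] at hj2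
      nlinarith
  · -- the cone condition
    intro xbar hxbar hset
    -- the point (-1, 0) belongs to the intersection
    have hmem : (![-1, 0] : Fin 2 → ℝ) ∈
        closure (coneGen
          ((fun x : Fin 2 → ℝ => ![-x 0, x 1] - (![-xbar 0, xbar 1] - ε)) '' orthant 2))
          ∩ (-(orthant 2)) := by
      constructor
      · have hseq : ∀ n : ℕ, (![-1, ε 1 / (n + 1)] : Fin 2 → ℝ) ∈
            coneGen ((fun x : Fin 2 → ℝ => ![-x 0, x 1] - (![-xbar 0, xbar 1] - ε)) '' orthant 2) := by
          intro n
          refine ⟨1 / (n + 1), by positivity, ![-(n + 1), ε 1], ⟨![(n : ℝ) + 1 + xbar 0 + ε 0, xbar 1], ?_, ?_⟩, ?_⟩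
          · intro i
            fin_cases i <;> simp
            · have := hxbar 0
              positivity
            · exact hxbar 1
          · funext i
            fin_cases i <;>
              simp [Matrix.vecHead, Matrix.vecTail, Fin.succ_zero_eq_one] <;> ring
          · funext i
            have hn : ((n : ℝ) + 1) ≠ 0 := by positivity
            fin_cases i <;>
              simp [Matrix.vecHead, Matrix.vecTail, Fin.succ_zero_eq_one] <;> field_simp <;> ring
        refine mem_closure_of_tendsto (b := Filter.atTop) (f := fun n : ℕ => (![-1, ε 1 / (n + 1)] : Fin 2 → ℝ))
          ?_ (Filter.Eventually.of_forall hseq)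
        rw [tendsto_pi_nhds]
        intro i
        fin_cases i
        · simpa using tendsto_const_nhds
        · simpa using (tendsto_one_div_add_atTop_nhds_zero_nat.const_mul (ε 1)).congr
            (fun n => by field_simp)
      · rw [Set.mem_neg]
        intro i
        fin_cases i <;> norm_num
    rw [hset] at hmem
    have : (![-1, 0] : Fin 2 → ℝ) 0 = 0 := by rw [hmem]; rfl
    norm_num at this
  · -- ε-efficient solution exists: take xbar = 0
    refine ⟨fun _ => 0, fun i => le_refl 0, ?_⟩
    rintro ⟨y, hy, hor, -⟩
    have h1 := hor 1
    have h2 := hy 1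
    simp [Pi.sub_apply, Matrix.vecHead, Matrix.vecTail, Fin.succ_zero_eq_one] at h1
    linarith
end
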